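/- arXiv:2512.09968 — 11 statements merged into one kernel-verified Lean document; each statement's English description precedes it below -/
import Mathlib

section
/- Let (a_n) be a sequence of nonnegative reals such that the series Σ_{n=0}^∞ a_n diverges with rate of divergence θ, and let N ∈ ℕ, N ≥ 1. Then the series Σ_{n=0}^∞ a_{n+N} diverges with rate of divergence θ*(n) = θ(n + ⌈Σ_{i=0}^{N-1} a_i⌉) ∸ N (truncated subtraction). Moreover, if a_n ∈ [0,1] for all n, then one can take θ*(n) = θ⁺(n+N) ∸ N, where θ⁺(n) = max{θ(i) : 0 ≤ i ≤ n}. -/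
/-- If `∑ a_n` diverges with rate of divergence `θ` and `N ≥ 1`, then `∑ a_{n+N}` diverges
with rate of divergence `θ*(n) = θ(n + ⌈∑_{i<N} a_i⌉) ∸ N`; moreover, if `a_n ∈ [0,1]` for
all `n`, one can take `θ*(n) = θ⁺(n+N) ∸ N` where `θ⁺(n) = max_{i ≤ n} θ(i)`. -/
theorem rate_of_divergence_shift (a : ℕ → ℝ) (ha : ∀ n, 0 ≤ a n) (θ : ℕ → ℕ)
    (hθ : ∀ n : ℕ, (n : ℝ) ≤ ∑ i ∈ Finset.range (θ n + 1), a i)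
    (N : ℕ) (hN : 1 ≤ N) :
    (∀ n : ℕ, (n : ℝ) ≤
      ∑ i ∈ Finset.range ((θ (n + ⌈∑ i ∈ Finset.range N, a i⌉₊) - N) + 1), a (i + N)) ∧
    ((∀ n, a n ≤ 1) → ∀ n : ℕ, (n : ℝ) ≤
      ∑ i ∈ Finset.range (((Finset.range (n + N + 1)).sup θ - N) + 1), a (i + N)) := by
  set S := ∑ i ∈ Finset.range N, a i with hS
  have hS0 : 0 ≤ S := Finset.sum_nonneg fun i _ => ha i
  have hceil : S ≤ (⌈S⌉₊ : ℝ) := Nat.le_ceil S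
  have split : ∀ k : ℕ, ∑ i ∈ Finset.range (N + k), a i
      = S + ∑ i ∈ Finset.range k, a (i + N) := by
    intro k
    rw [Finset.sum_range_add]
    simp [Nat.add_comm, hS]
  have mono : ∀ {p q : ℕ}, p ≤ q →
      ∑ i ∈ Finset.range p, a i ≤ ∑ i ∈ Finset.range q, a i :=
    fun h => Finset.sum_le_sum_of_subset_of_nonneg (Finset.range_subset_range.2 h)
      (fun i _ _ => ha i)
  constructor
  · intro n
    set m := n + ⌈S⌉₊ with hmdef
    by_cases hcase : N ≤ θ m
    · have h1 : (m : ℝ) ≤ ∑ i ∈ Finset.range (θ m + 1), a i := hθ m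
      have heq : θ m + 1 = N + ((θ m - N) + 1) := by omega
      rw [heq, split] at h1
      have hm : (m : ℝ) = (n : ℝ) + (⌈S⌉₊ : ℝ) := by
        rw [hmdef]; push_cast; ring
      linarith
    · have h1 : (m : ℝ) ≤ ∑ i ∈ Finset.range (θ m + 1), a i := hθ m
      have h2 : ∑ i ∈ Finset.range (θ m + 1), a i ≤ S := mono (by omega)
      have hm : m ≤ ⌈S⌉₊ := by
        have : (m : ℝ) ≤ (⌈S⌉₊ : ℝ) := le_trans h1 (le_trans h2 hceil)
        exact_mod_cast this
      have hn : n = 0 := by omega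
      subst hn
      simpa using Finset.sum_nonneg fun i (_ : i ∈ Finset.range _) => ha (i + N)
  · intro hle n
    set T := (Finset.range (n + N + 1)).sup θ with hT
    have hθT : θ (n + N) ≤ T := Finset.le_sup (Finset.self_mem_range_succ _)
    have h1 : ((n + N : ℕ) : ℝ) ≤ ∑ i ∈ Finset.range (θ (n + N) + 1), a i := hθ (n + N)
    have h2 : ∑ i ∈ Finset.range (θ (n + N) + 1), a i ≤ ∑ i ∈ Finset.range (T + 1), a i :=
      mono (by omega)
    have hSN : S ≤ (N : ℝ) := by
      calc S ≤ ∑ _i ∈ Finset.range N, (1 : ℝ) := Finset.sum_le_sum fun i _ => hle i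
        _ = N := by simp
    by_cases hcase : N ≤ T
    · have heq : T + 1 = N + ((T - N) + 1) := by omega
      have h3 : ((n + N : ℕ) : ℝ) ≤ S + ∑ i ∈ Finset.range ((T - N) + 1), a (i + N) := by
        rw [heq, split] at h2; linarith
      push_cast at h3
      linarith
    · have hbound : ∑ i ∈ Finset.range (T + 1), a i ≤ ((T + 1 : ℕ) : ℝ) := by
        calc ∑ i ∈ Finset.range (T + 1), a i
            ≤ ∑ _i ∈ Finset.range (T + 1), (1 : ℝ) := Finset.sum_le_sum fun i _ => hle i
          _ = _ := by simp
      have hcast : ((n + N : ℕ) : ℝ) ≤ ((T + 1 : ℕ) : ℝ) :=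
        le_trans h1 (le_trans h2 hbound)
      have hn : n = 0 := by
        have := Nat.cast_le.mp hcast; omega
      subst hn
      simpa using Finset.sum_nonneg fun i (_ : i ∈ Finset.range _) => ha (i + N)
end

section
/- Let (a_n) ⊆ [0,1], (s_n) ⊆ [0,∞), and (b_n) be sequences of reals, and L ∈ ℕ, L ≥ 1, an upper bound on (s_n). Assume Σ_{n=0}^∞ a_n diverges with rate of divergence θ, that s_{n+1} ≤ (1 - a_n)·s_n + a_n·b_n for all n ∈ ℕ, and that ψ : ℕ → ℕ satisfies: for all k, n ∈ ℕ with n ≥ ψ(k), b_n ≤ 1/(k+1). Then s_n → 0 with rate of convergence Σ(k) = θ(ψ(2k+1) + ⌈ln(2L(k+1))⌉) + 1. -/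
/-- Quantitative Xu lemma, first form: if `s_{n+1} ≤ (1-a_n)s_n + a_n b_n` with
`(a_n) ⊆ [0,1]`, `∑ a_n` diverging with rate `θ`, `(s_n)` nonnegative bounded by `L ≥ 1`,
and `b_n ≤ 1/(k+1)` for `n ≥ ψ(k)`, then `s_n → 0` with rate of convergence
`Σ(k) = θ(ψ(2k+1) + ⌈ln(2L(k+1))⌉) + 1`. -/
theorem xu_lemma_quantitative_bn (a b s : ℕ → ℝ) (L : ℕ) (hL : 1 ≤ L)
    (ha : ∀ n, a n ∈ Set.Icc (0 : ℝ) 1)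
    (hs : ∀ n, 0 ≤ s n) (hsL : ∀ n, s n ≤ L)
    (θ : ℕ → ℕ) (hθ : ∀ n : ℕ, (n : ℝ) ≤ ∑ i ∈ Finset.range (θ n + 1), a i)
    (hrec : ∀ n, s (n + 1) ≤ (1 - a n) * s n + a n * b n)
    (ψ : ℕ → ℕ) (hψ : ∀ k n : ℕ, ψ k ≤ n → b n ≤ 1 / ((k : ℝ) + 1)) :
    ∀ k n : ℕ, θ (ψ (2 * k + 1) + ⌈Real.log (2 * (L : ℝ) * ((k : ℝ) + 1))⌉₊) + 1 ≤ n →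
      |s n| ≤ 1 / ((k : ℝ) + 1) := by
  intro k n hn
  set N := ψ (2 * k + 1) with hNdef
  set M := ⌈Real.log (2 * (L : ℝ) * ((k : ℝ) + 1))⌉₊ with hMdef
  have hk1 : (0:ℝ) < (k:ℝ) + 1 := by positivity
  have hLpos : (0:ℝ) < (L:ℝ) := by exact_mod_cast hL
  have hc : (0:ℝ) < 1 / (2 * ((k:ℝ) + 1)) := by positivity
  -- key induction
  have key : ∀ m, s (N + m) ≤ (∏ i ∈ Finset.range m, (1 - a (N + i))) * L
      + 1 / (2 * ((k:ℝ) + 1)) := by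
    intro m
    induction m with
    | zero =>
      simp only [Finset.range_zero, Finset.prod_empty, one_mul, Nat.add_zero]
      linarith [hsL N]
    | succ m ih =>
      have hb : b (N + m) ≤ 1 / (2 * ((k:ℝ) + 1)) := by
        have h1 := hψ (2 * k + 1) (N + m) (Nat.le_add_right _ _)
        have h2 : ((2 * k + 1 : ℕ) : ℝ) + 1 = 2 * ((k:ℝ) + 1) := by push_cast; ring
        rwa [h2] at h1
      have hA := ha (N + m)
      obtain ⟨hA0, hA1⟩ := hA
      have hrec' := hrec (N + m)
      rw [Finset.prod_range_succ]
      have h3 : (1 - a (N + m)) * s (N + m) ≤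
          (1 - a (N + m)) * ((∏ i ∈ Finset.range m, (1 - a (N + i))) * L
            + 1 / (2 * ((k:ℝ) + 1))) :=
        mul_le_mul_of_nonneg_left ih (by linarith)
      have h4 : a (N + m) * b (N + m) ≤ a (N + m) * (1 / (2 * ((k:ℝ) + 1))) :=
        mul_le_mul_of_nonneg_left hb hA0
      have : N + (m + 1) = (N + m) + 1 := by ring
      rw [this]
      calc s ((N + m) + 1) ≤ (1 - a (N + m)) * s (N + m) + a (N + m) * b (N + m) := hrec'
        _ ≤ (1 - a (N + m)) * ((∏ i ∈ Finset.range m, (1 - a (N + i))) * L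
            + 1 / (2 * ((k:ℝ) + 1))) + a (N + m) * (1 / (2 * ((k:ℝ) + 1))) := by linarith
        _ = (∏ i ∈ Finset.range m, (1 - a (N + i))) * (1 - a (N + m)) * L
            + 1 / (2 * ((k:ℝ) + 1)) := by ring
  -- n = N + m
  have hθN : (N + M : ℝ) ≤ (θ (N + M) : ℝ) + 1 := by
    calc (N + M : ℝ) ≤ ∑ i ∈ Finset.range (θ (N + M) + 1), a i := by exact_mod_cast hθ (N + M)
      _ ≤ ∑ i ∈ Finset.range (θ (N + M) + 1), (1:ℝ) :=
        Finset.sum_le_sum fun i _ => (ha i).2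
      _ = (θ (N + M) : ℝ) + 1 := by simp
  have hMln : Real.log (2 * (L:ℝ) * ((k:ℝ) + 1)) ≤ (M : ℝ) := Nat.le_ceil _
  have hNM_le : N + M ≤ θ (N + M) + 1 := by exact_mod_cast hθN
  have hNn : N ≤ n := by
    have hM1 : 1 ≤ M := by
      have : Real.log 2 ≤ Real.log (2 * (L:ℝ) * ((k:ℝ) + 1)) := by
        apply Real.log_le_log (by norm_num)
        have hL1 : (1:ℝ) ≤ (L:ℝ) := by exact_mod_cast hL
        have hk1' : (1:ℝ) ≤ (k:ℝ) + 1 := by linarith [Nat.cast_nonneg (α := ℝ) k]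
        nlinarith [mul_le_mul hL1 hk1' (by norm_num) (by linarith)]
      have h2 : (0:ℝ) < Real.log 2 := Real.log_pos (by norm_num)
      have : (0:ℝ) < Real.log (2 * (L:ℝ) * ((k:ℝ) + 1)) := by linarith
      exact Nat.one_le_ceil_iff.mpr this
    omega
  obtain ⟨m, rfl⟩ := Nat.exists_eq_add_of_le hNn
  -- sum bound
  have hsum : (M : ℝ) ≤ ∑ i ∈ Finset.range m, a (N + i) := by
    have h1 : ((N + M : ℕ) : ℝ) ≤ ∑ i ∈ Finset.range (N + m), a i := by
      calc ((N + M : ℕ) : ℝ) ≤ ∑ i ∈ Finset.range (θ (N + M) + 1), a i := hθ (N + M)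
        _ ≤ ∑ i ∈ Finset.range (N + m), a i := by
          apply Finset.sum_le_sum_of_subset_of_nonneg
          · exact Finset.range_subset_range.mpr hn
          · intro i _ _; exact (ha i).1
    rw [Finset.sum_range_add] at h1
    have h2 : ∑ i ∈ Finset.range N, a i ≤ (N : ℝ) := by
      calc ∑ i ∈ Finset.range N, a i ≤ ∑ i ∈ Finset.range N, (1:ℝ) :=
        Finset.sum_le_sum fun i _ => (ha i).2
        _ = (N : ℝ) := by simp
    push_cast at h1 ⊢
    linarith
  -- product bound
  have hprod : (∏ i ∈ Finset.range m, (1 - a (N + i))) ≤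
      Real.exp (-(∑ i ∈ Finset.range m, a (N + i))) := by
    calc (∏ i ∈ Finset.range m, (1 - a (N + i)))
        ≤ ∏ i ∈ Finset.range m, Real.exp (-(a (N + i))) := by
          apply Finset.prod_le_prod
          · intro i _; linarith [(ha (N + i)).2]
          · intro i _
            have := Real.add_one_le_exp (-(a (N + i)))
            linarith
      _ = Real.exp (∑ i ∈ Finset.range m, -(a (N + i))) := (Real.exp_sum _ _).symm
      _ = Real.exp (-(∑ i ∈ Finset.range m, a (N + i))) := by rw [Finset.sum_neg_distrib]
  have hexp : Real.exp (-(∑ i ∈ Finset.range m, a (N + i))) ≤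
      1 / (2 * (L:ℝ) * ((k:ℝ) + 1)) := by
    have h1 : Real.exp (-(∑ i ∈ Finset.range m, a (N + i))) ≤
        Real.exp (-(Real.log (2 * (L:ℝ) * ((k:ℝ) + 1)))) := by
      apply Real.exp_le_exp.mpr
      have : Real.log (2 * (L:ℝ) * ((k:ℝ) + 1)) ≤ ∑ i ∈ Finset.range m, a (N + i) :=
        le_trans hMln hsum
      linarith
    have h2 : Real.exp (-(Real.log (2 * (L:ℝ) * ((k:ℝ) + 1)))) =
        1 / (2 * (L:ℝ) * ((k:ℝ) + 1)) := by
      rw [Real.exp_neg, Real.exp_log (by positivity), one_div]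
    rw [h2] at h1
    exact h1
  have hPnn : (0:ℝ) ≤ ∏ i ∈ Finset.range m, (1 - a (N + i)) :=
    Finset.prod_nonneg fun i _ => by linarith [(ha (N + i)).2]
  have hfinal : s (N + m) ≤ 1 / ((k:ℝ) + 1) := by
    have h1 : (∏ i ∈ Finset.range m, (1 - a (N + i))) * L ≤
        (1 / (2 * (L:ℝ) * ((k:ℝ) + 1))) * L := by
      apply mul_le_mul_of_nonneg_right (le_trans hprod hexp) (le_of_lt hLpos)
    have h2 : (1 / (2 * (L:ℝ) * ((k:ℝ) + 1))) * L = 1 / (2 * ((k:ℝ) + 1)) := by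
      field_simp
    have := key m
    rw [h2] at h1
    have h3 : 1 / (2 * ((k:ℝ) + 1)) + 1 / (2 * ((k:ℝ) + 1)) = 1 / ((k:ℝ) + 1) := by
      rw [← add_div]
      rw [div_eq_div_iff (by positivity) (by positivity)]
      ring
    linarith
  rw [abs_of_nonneg (hs _)]
  exact hfinal
end

section
/- Let (a_n) ⊆ [0,1] and (c_n), (s_n) ⊆ [0,∞) be sequences of reals, and L ∈ ℕ, L ≥ 1, an upper bound on (s_n). Assume Σ_{n=0}^∞ a_n diverges with rate of divergence θ, that s_{n+1} ≤ (1 - a_n)·s_n + c_n for all n ∈ ℕ, and that Σ_{n=0}^∞ c_n converges with Cauchy modulus χ. Then s_n → 0 with rate of convergence Σ(k) = θ(χ(2k+1) + 1 + ⌈ln(2L(k+1))⌉) + 1. -/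
/-- Quantitative Xu lemma, second form: if `s_{n+1} ≤ (1-a_n)s_n + c_n` with
`(a_n) ⊆ [0,1]`, `∑ a_n` diverging with rate `θ`, `(s_n)` nonnegative bounded by `L ≥ 1`,
`(c_n)` nonnegative with `∑ c_n` converging with Cauchy modulus `χ`, then `s_n → 0` with
rate of convergence `Σ(k) = θ(χ(2k+1) + 1 + ⌈ln(2L(k+1))⌉) + 1`. -/
theorem xu_lemma_quantitative_cn (a c s : ℕ → ℝ) (L : ℕ) (hL : 1 ≤ L)
    (ha : ∀ n, a n ∈ Set.Icc (0 : ℝ) 1)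
    (hc : ∀ n, 0 ≤ c n)
    (hs : ∀ n, 0 ≤ s n) (hsL : ∀ n, s n ≤ L)
    (θ : ℕ → ℕ) (hθ : ∀ n : ℕ, (n : ℝ) ≤ ∑ i ∈ Finset.range (θ n + 1), a i)
    (hrec : ∀ n, s (n + 1) ≤ (1 - a n) * s n + c n)
    (χ : ℕ → ℕ)
    (hχ : ∀ k n : ℕ, χ k ≤ n → ∀ p : ℕ,
      ∑ i ∈ Finset.Icc (n + 1) (n + p), c i ≤ 1 / ((k : ℝ) + 1)) :
    ∀ k n : ℕ, θ (χ (2 * k + 1) + 1 + ⌈Real.log (2 * (L : ℝ) * ((k : ℝ) + 1))⌉₊) + 1 ≤ n →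
      |s n| ≤ 1 / ((k : ℝ) + 1) := by
  intro k n hn
  set m := χ (2 * k + 1) + 1 with hm
  set M := ⌈Real.log (2 * (L : ℝ) * ((k : ℝ) + 1))⌉₊ with hMdef
  have hL1 : (1 : ℝ) ≤ (L : ℝ) := by exact_mod_cast hL
  have hk1 : (0 : ℝ) < (k : ℝ) + 1 := by positivity
  have hlogpos : (0 : ℝ) < Real.log (2 * (L : ℝ) * ((k : ℝ) + 1)) := by
    apply Real.log_pos; nlinarith
  -- sum over range n is large
  have hrange : (↑(m + M) : ℝ) ≤ ∑ i ∈ Finset.range n, a i := by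
    calc (↑(m + M) : ℝ) ≤ ∑ i ∈ Finset.range (θ (m + M) + 1), a i := hθ (m + M)
      _ ≤ ∑ i ∈ Finset.range n, a i := by
          apply Finset.sum_le_sum_of_subset_of_nonneg
          · exact Finset.range_subset_range.mpr hn
          · intro i _ _; exact (ha i).1
  have hsum_le : ∀ N : ℕ, ∑ i ∈ Finset.range N, a i ≤ N := by
    intro N
    calc ∑ i ∈ Finset.range N, a i ≤ ∑ i ∈ Finset.range N, 1 :=
          Finset.sum_le_sum (fun i _ => (ha i).2)
      _ = N := by simp
  have hmn : m + M ≤ n := by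
    have := (hrange.trans (hsum_le n))
    exact_mod_cast this
  have hM1 : 1 ≤ M := Nat.one_le_iff_ne_zero.mpr (by
    simp only [hMdef]; positivity)
  have hmn' : m ≤ n := by omega
  -- tail sum of a on Ico m n
  have hS : (M : ℝ) ≤ ∑ i ∈ Finset.Ico m n, a i := by
    have hsplit := Finset.sum_range_add_sum_Ico a hmn'
    have h1 := hsum_le m
    push_cast [hm] at hrange h1
    linarith
  -- recursion unfolding
  have key : ∀ n', m ≤ n' →
      s n' ≤ (∏ i ∈ Finset.Ico m n', (1 - a i)) * s m + ∑ i ∈ Finset.Ico m n', c i := by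
    intro n' hn'
    induction n', hn' using Nat.le_induction with
    | base => simp
    | succ n' hn' ih =>
      have h1 : 0 ≤ 1 - a n' := by linarith [(ha n').2]
      have h2 : 1 - a n' ≤ 1 := by linarith [(ha n').1]
      have hprod : 0 ≤ ∏ i ∈ Finset.Ico m n', (1 - a i) :=
        Finset.prod_nonneg (fun i _ => by linarith [(ha i).2])
      have hsum : 0 ≤ ∑ i ∈ Finset.Ico m n', c i :=
        Finset.sum_nonneg fun i _ => hc i
      rw [Finset.prod_Ico_succ_top hn', Finset.sum_Ico_succ_top hn']
      have h3 : (1 - a n') * s n' ≤ (1 - a n') *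
          ((∏ i ∈ Finset.Ico m n', (1 - a i)) * s m + ∑ i ∈ Finset.Ico m n', c i) :=
        mul_le_mul_of_nonneg_left ih h1
      have h4 := hrec n'
      nlinarith [hs m, mul_nonneg hprod (hs m)]
  -- product bound
  have hprodexp : ∏ i ∈ Finset.Ico m n, (1 - a i) ≤
      Real.exp (-(∑ i ∈ Finset.Ico m n, a i)) := by
    calc ∏ i ∈ Finset.Ico m n, (1 - a i) ≤ ∏ i ∈ Finset.Ico m n, Real.exp (-(a i)) := by
          apply Finset.prod_le_prod
          · intro i _; linarith [(ha i).2]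
          · intro i _; have := Real.add_one_le_exp (-(a i)); linarith
      _ = Real.exp (∑ i ∈ Finset.Ico m n, -(a i)) := (Real.exp_sum _ _).symm
      _ = Real.exp (-(∑ i ∈ Finset.Ico m n, a i)) := by rw [Finset.sum_neg_distrib]
  have hexp : Real.exp (-(∑ i ∈ Finset.Ico m n, a i)) ≤
      1 / (2 * (L : ℝ) * ((k : ℝ) + 1)) := by
    rw [Real.exp_neg]
    rw [one_div, inv_le_inv₀ (Real.exp_pos _) (by positivity)]
    calc 2 * (L : ℝ) * ((k : ℝ) + 1)
        = Real.exp (Real.log (2 * (L : ℝ) * ((k : ℝ) + 1))) := by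
          rw [Real.exp_log (by positivity)]
      _ ≤ Real.exp (M : ℝ) := Real.exp_le_exp.mpr (Nat.le_ceil _)
      _ ≤ Real.exp (∑ i ∈ Finset.Ico m n, a i) := Real.exp_le_exp.mpr hS
  -- tail of c
  have hcbound : ∑ i ∈ Finset.Ico m n, c i ≤ 1 / (2 * (k : ℝ) + 2) := by
    have h := hχ (2 * k + 1) (χ (2 * k + 1)) le_rfl (n - m)
    have heq : Finset.Ico m n = Finset.Icc (χ (2 * k + 1) + 1) (χ (2 * k + 1) + (n - m)) := by
      have h5 : χ (2 * k + 1) + (n - m) + 1 = n := by omega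
      rw [← Finset.Ico_add_one_right_eq_Icc, h5, hm]
    rw [heq]
    push_cast at h ⊢
    convert h using 2
    ring
  -- combine
  rw [abs_of_nonneg (hs n)]
  have h1 := key n hmn'
  have hprodL : (∏ i ∈ Finset.Ico m n, (1 - a i)) * s m ≤ 1 / (2 * ((k : ℝ) + 1)) := by
    have hprod : 0 ≤ ∏ i ∈ Finset.Ico m n, (1 - a i) :=
      Finset.prod_nonneg (fun i _ => by linarith [(ha i).2])
    have h2 : (∏ i ∈ Finset.Ico m n, (1 - a i)) * s m ≤
        Real.exp (-(∑ i ∈ Finset.Ico m n, a i)) * (L : ℝ) :=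
      mul_le_mul hprodexp (hsL m) (hs m) (Real.exp_pos _).le
    have h3 : Real.exp (-(∑ i ∈ Finset.Ico m n, a i)) * (L : ℝ) ≤
        (1 / (2 * (L : ℝ) * ((k : ℝ) + 1))) * (L : ℝ) :=
      mul_le_mul_of_nonneg_right hexp (by positivity)
    have h4 : (1 / (2 * (L : ℝ) * ((k : ℝ) + 1))) * (L : ℝ) = 1 / (2 * ((k : ℝ) + 1)) := by
      field_simp
    linarith
  have : 1 / (2 * ((k : ℝ) + 1)) + 1 / (2 * (k : ℝ) + 2) = 1 / ((k : ℝ) + 1) := by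
    field_simp; ring
  linarith
end

section
/- Let L > 0, let J and N be real numbers with J ≥ N ≥ 2, let γ ∈ (0,1], and set a_n = N/(γ(n+J)) for all n ∈ ℕ. Let (c_n) be a sequence of reals bounded above by L and (s_n) a sequence of nonnegative reals with s_0 ≤ L such that s_{n+1} ≤ (1 - γ·a_{n+1})·s_n + (a_n - a_{n+1})·c_n for all n ∈ ℕ. Then s_n ≤ J·L/(γ(n+J)) for all n ∈ ℕ. -/
/-- Sabach–Shtern lemma: if `a_n = N/(γ(n+J))` with `J ≥ N ≥ 2`, `γ ∈ (0,1]`, `(c_n)` is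
bounded above by `L > 0`, `(s_n)` is nonnegative with `s_0 ≤ L` and
`s_{n+1} ≤ (1 - γ a_{n+1}) s_n + (a_n - a_{n+1}) c_n`, then `s_n ≤ J L/(γ(n+J))`. -/
theorem sabach_shtern (L J N γ : ℝ) (hL : 0 < L) (hJN : N ≤ J) (hN : 2 ≤ N)
    (hγ0 : 0 < γ) (hγ1 : γ ≤ 1)
    (a c s : ℕ → ℝ)
    (ha : ∀ n : ℕ, a n = N / (γ * ((n : ℝ) + J)))
    (hc : ∀ n, c n ≤ L)
    (hs : ∀ n, 0 ≤ s n) (hs0 : s 0 ≤ L)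
    (hrec : ∀ n : ℕ, s (n + 1) ≤ (1 - γ * a (n + 1)) * s n + (a n - a (n + 1)) * c n) :
    ∀ n : ℕ, s n ≤ J * L / (γ * ((n : ℝ) + J)) := by
  have hJ : (2:ℝ) ≤ J := le_trans hN hJN
  intro n
  induction n with
  | zero =>
    have hpos : 0 < γ * ((0:ℕ) + J : ℝ) := by positivity
    rw [le_div_iff₀ hpos]
    push_cast
    nlinarith [mul_le_mul_of_nonneg_right (mul_le_mul hs0 hγ1 hγ0.le hL.le) (by linarith : (0:ℝ) ≤ J)]
  | succ n ih =>
    have hx : (0:ℝ) ≤ (n:ℝ) := Nat.cast_nonneg n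
    have hd0 : (0:ℝ) < γ * ((n:ℝ) + J) := by positivity
    have hd1 : (0:ℝ) < γ * ((n:ℝ) + 1 + J) := by positivity
    have h := hrec n
    rw [ha n, ha (n+1)] at h
    push_cast at h ⊢
    -- nonnegativity of coefficients
    have hcoef : 0 ≤ 1 - γ * (N / (γ * ((n:ℝ) + 1 + J))) := by
      rw [sub_nonneg]
      rw [mul_div_assoc', mul_comm γ]
      rw [div_le_one hd1]
      nlinarith
    have hdiff : 0 ≤ N / (γ * ((n:ℝ) + J)) - N / (γ * ((n:ℝ) + 1 + J)) := by
      rw [sub_nonneg]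
      apply div_le_div_of_nonneg_left (by linarith) hd0
      nlinarith
    have step1 : s (n+1) ≤ (1 - γ * (N / (γ * ((n:ℝ) + 1 + J)))) * (J * L / (γ * ((n:ℝ) + J)))
        + (N / (γ * ((n:ℝ) + J)) - N / (γ * ((n:ℝ) + 1 + J))) * L := by
      refine le_trans h (add_le_add ?_ ?_)
      · exact mul_le_mul_of_nonneg_left ih hcoef
      · exact mul_le_mul_of_nonneg_left (hc n) hdiff
    refine le_trans step1 ?_
    have key : (1 - γ * (N / (γ * ((n:ℝ) + 1 + J)))) * (J * L / (γ * ((n:ℝ) + J)))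
        + (N / (γ * ((n:ℝ) + J)) - N / (γ * ((n:ℝ) + 1 + J))) * L
        - J * L / (γ * ((n:ℝ) + 1 + J))
        = γ * L * (J + N - J * N) / ((γ * ((n:ℝ) + J)) * (γ * ((n:ℝ) + 1 + J))) := by
      field_simp
      ring
    have hJN0 : J + N - J * N ≤ 0 := by nlinarith
    have : γ * L * (J + N - J * N) / ((γ * ((n:ℝ) + J)) * (γ * ((n:ℝ) + 1 + J))) ≤ 0 := by
      apply div_nonpos_of_nonpos_of_nonneg
      · nlinarith [mul_le_mul_of_nonneg_left hJN0 (mul_pos hγ0 hL).le]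
      · positivity
    linarith [key ▸ this]
end

section
/- Let (x_n), (y_n) be sequences in a metric space (X,d) such that (x_n) is Cauchy with rate of metastability Ω and d(x_n, y_n) → 0 with rate of convergence φ. Then (y_n) is Cauchy with rate of metastability Γ(k,g) = max{φ(3k+2), Ω(3k+2, h_{k,g})}, where h_{k,g}(m) = max{φ(3k+2), m} - m + g(max{φ(3k+2), m}). -/
/-- If `(x_n)` is Cauchy with rate of metastability `Ω` and `d(x_n, y_n) → 0` with rate of
convergence `φ`, then `(y_n)` is Cauchy with rate of metastability
`Γ(k,g) = max {φ(3k+2), Ω(3k+2, h_{k,g})}` where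
`h_{k,g}(m) = max {φ(3k+2), m} - m + g(max {φ(3k+2), m})`. -/
theorem rate_of_metastability_transfer {X : Type*} [MetricSpace X] (x y : ℕ → X)
    (hxCauchy : CauchySeq x)
    (Ω : ℕ → (ℕ → ℕ) → ℕ)
    (hΩ : ∀ (k : ℕ) (g : ℕ → ℕ), ∃ N ≤ Ω k g, ∀ i j : ℕ,
      N ≤ i → i ≤ N + g N → N ≤ j → j ≤ N + g N → dist (x i) (x j) ≤ 1 / ((k : ℝ) + 1))
    (φ : ℕ → ℕ)
    (hφ : ∀ k n : ℕ, φ k ≤ n → dist (x n) (y n) ≤ 1 / ((k : ℝ) + 1)) :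
    CauchySeq y ∧
    ∀ (k : ℕ) (g : ℕ → ℕ),
      ∃ N ≤ max (φ (3 * k + 2))
          (Ω (3 * k + 2) (fun m => max (φ (3 * k + 2)) m - m + g (max (φ (3 * k + 2)) m))),
        ∀ i j : ℕ, N ≤ i → i ≤ N + g N → N ≤ j → j ≤ N + g N →
          dist (y i) (y j) ≤ 1 / ((k : ℝ) + 1) := by
  constructor
  · rw [Metric.cauchySeq_iff] at hxCauchy ⊢
    intro ε hε
    obtain ⟨N1, hN1⟩ := hxCauchy (ε / 3) (by linarith)
    obtain ⟨k, hk⟩ := exists_nat_one_div_lt (show (0:ℝ) < ε / 3 by linarith)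
    refine ⟨max N1 (φ k), fun m hm n hn => ?_⟩
    have h1 := hφ k m (le_trans (le_max_right _ _) hm)
    have h2 := hφ k n (le_trans (le_max_right _ _) hn)
    have h3 := hN1 m (le_trans (le_max_left _ _) hm) n (le_trans (le_max_left _ _) hn)
    calc dist (y m) (y n) ≤ dist (y m) (x m) + dist (x m) (x n) + dist (x n) (y n) :=
          dist_triangle4 _ _ _ _
      _ < ε := by rw [dist_comm (y m)]; linarith
  · intro k g
    set K := 3 * k + 2 with hK
    set h : ℕ → ℕ := fun m => max (φ K) m - m + g (max (φ K) m) with hh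
    obtain ⟨N, hNle, hN⟩ := hΩ K h
    refine ⟨max (φ K) N, max_le_max le_rfl hNle, fun i j hi hij hj hjj => ?_⟩
    have hNi : N ≤ i := le_trans (le_max_right _ _) hi
    have hNj : N ≤ j := le_trans (le_max_right _ _) hj
    have heq : max (φ K) N + g (max (φ K) N) = N + h N := by
      simp only [hh]
      omega
    have hxij := hN i j hNi (by omega) hNj (by omega)
    have h1 := hφ K i (le_trans (le_max_left _ _) hi)
    have h2 := hφ K j (le_trans (le_max_left _ _) hj)
    calc dist (y i) (y j) ≤ dist (y i) (x i) + dist (x i) (x j) + dist (x j) (y j) :=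
          dist_triangle4 _ _ _ _
      _ ≤ 1 / ((k : ℝ) + 1) := by
          rw [dist_comm (y i)]
          have hKr : ((K : ℕ) : ℝ) + 1 = 3 * ((k : ℝ) + 1) := by push_cast [hK]; ring
          rw [hKr] at h1 h2 hxij
          have hkpos : (0:ℝ) < (k : ℝ) + 1 := by positivity
          have : 1 / (3 * ((k : ℝ) + 1)) = (1 / ((k:ℝ)+1)) / 3 := by
            field_simp
          rw [this] at h1 h2 hxij
          linarith
end

section
/- In the genVAM setting in a real normed space, for all n ∈ ℕ one has ‖x_n - T_n x_n‖ ≤ ‖x_n - x_{n+1}‖ + 2K_z·α_n. -/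
/-- In the genVAM setting, `‖x_n - T_n x_n‖ ≤ ‖x_n - x_{n+1}‖ + 2 K_z α_n` for all `n`. -/
theorem genVAM_dist_to_Tn {X : Type*} [NormedAddCommGroup X] [NormedSpace ℝ X]
    (C : Set X) (hCne : C.Nonempty) (hC : Convex ℝ C)
    (f : X → X) (α : ℝ) (hα0 : 0 ≤ α) (hα1 : α < 1)
    (hfC : ∀ x ∈ C, f x ∈ C)
    (hf : ∀ x ∈ C, ∀ y ∈ C, ‖f x - f y‖ ≤ α * ‖x - y‖)
    (T : ℕ → X → X) (hTC : ∀ n, ∀ x ∈ C, T n x ∈ C)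
    (hT : ∀ n, ∀ x ∈ C, ∀ y ∈ C, ‖T n x - T n y‖ ≤ ‖x - y‖)
    (z : X) (hz : z ∈ C) (hzfix : ∀ n, T n z = z)
    (a : ℕ → ℝ) (ha : ∀ n, a n ∈ Set.Icc (0 : ℝ) 1)
    (x : ℕ → X) (hx0 : x 0 ∈ C)
    (hx : ∀ n, x (n + 1) = a n • f (x n) + (1 - a n) • T n (x n))
    (K : ℕ) (hK : 1 ≤ K)
    (hK1 : ‖x 0 - z‖ ≤ K) (hK2 : ‖f z - z‖ / (1 - α) ≤ K) :
    ∀ n : ℕ, ‖x n - T n (x n)‖ ≤ ‖x n - x (n + 1)‖ + 2 * K * a n := by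
  have hα1' : (0:ℝ) < 1 - α := by linarith
  have hfz : ‖f z - z‖ ≤ (1 - α) * K := by
    rw [div_le_iff₀ hα1'] at hK2; linarith [hK2]
  -- boundedness and membership by induction
  have key : ∀ n, x n ∈ C ∧ ‖x n - z‖ ≤ K := by
    intro n
    induction n with
    | zero => exact ⟨hx0, hK1⟩
    | succ n ih =>
      obtain ⟨hxC, hxb⟩ := ih
      obtain ⟨ha0, ha1⟩ := ha n
      have hfxb : ‖f (x n) - z‖ ≤ K := by
        have h1 : ‖f (x n) - f z‖ ≤ α * ‖x n - z‖ := hf _ hxC _ hz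
        have h2 : ‖f (x n) - z‖ ≤ ‖f (x n) - f z‖ + ‖f z - z‖ :=
          norm_sub_le_norm_sub_add_norm_sub _ _ _
        have h3 : α * ‖x n - z‖ ≤ α * K := by
          exact mul_le_mul_of_nonneg_left hxb hα0
        linarith
      have hTxb : ‖T n (x n) - z‖ ≤ K := by
        have := hT n _ hxC _ hz
        rw [hzfix n] at this
        linarith
      constructor
      · rw [hx n]
        exact hC (hfC _ hxC) (hTC n _ hxC) ha0 (by linarith) (by ring)
      · rw [hx n]
        have : a n • f (x n) + (1 - a n) • T n (x n) - z
            = a n • (f (x n) - z) + (1 - a n) • (T n (x n) - z) := by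
          rw [smul_sub, smul_sub]
          module
        rw [this]
        calc ‖a n • (f (x n) - z) + (1 - a n) • (T n (x n) - z)‖
            ≤ a n * ‖f (x n) - z‖ + (1 - a n) * ‖T n (x n) - z‖ := by
              refine (norm_add_le _ _).trans ?_
              rw [norm_smul, norm_smul, Real.norm_of_nonneg ha0,
                Real.norm_of_nonneg (by linarith)]
          _ ≤ a n * K + (1 - a n) * K := by
              gcongr <;> linarith
          _ = K := by ring
  intro n
  obtain ⟨hxC, hxb⟩ := key n
  obtain ⟨ha0, ha1⟩ := ha n
  have hfxb : ‖f (x n) - z‖ ≤ K := by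
    have h1 : ‖f (x n) - f z‖ ≤ α * ‖x n - z‖ := hf _ hxC _ hz
    have h2 : ‖f (x n) - z‖ ≤ ‖f (x n) - f z‖ + ‖f z - z‖ :=
      norm_sub_le_norm_sub_add_norm_sub _ _ _
    have h3 : α * ‖x n - z‖ ≤ α * K := mul_le_mul_of_nonneg_left hxb hα0
    linarith
  have hTxb : ‖T n (x n) - z‖ ≤ K := by
    have := hT n _ hxC _ hz
    rw [hzfix n] at this
    linarith
  have hdiff : ‖f (x n) - T n (x n)‖ ≤ 2 * K := by
    have := norm_sub_le_norm_sub_add_norm_sub (f (x n)) z (T n (x n))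
    have h4 : ‖z - T n (x n)‖ = ‖T n (x n) - z‖ := norm_sub_rev _ _
    linarith
  have hkey : x (n+1) - T n (x n) = a n • (f (x n) - T n (x n)) := by
    rw [hx n, smul_sub]
    module
  calc ‖x n - T n (x n)‖
      ≤ ‖x n - x (n+1)‖ + ‖x (n+1) - T n (x n)‖ :=
        norm_sub_le_norm_sub_add_norm_sub _ _ _
    _ ≤ ‖x n - x (n+1)‖ + 2 * K * a n := by
        rw [hkey, norm_smul, Real.norm_of_nonneg ha0]
        have : a n * ‖f (x n) - T n (x n)‖ ≤ a n * (2 * K) :=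
          mul_le_mul_of_nonneg_left hdiff ha0
        linarith
end

section
/- In the genVAM setting in a real normed space, let (λ_n) be a sequence in (0,∞), let n ∈ ℕ, and set β_n = 1 - (1-α)·α_{n+1}. If the family (T_n) satisfies Res((λ_n), n, n+1), i.e. ‖T_n y - T_{n+1} y‖ ≤ |1 - λ_{n+1}/λ_n|·‖y - T_n y‖ for all y ∈ C, then ‖x_{n+2} - x_{n+1}‖ ≤ β_n·‖x_{n+1} - x_n‖ + 2K_z·(|α_{n+1} - α_n| + (1 - α_{n+1})·|1 - λ_{n+1}/λ_n|). -/
/-- In the genVAM setting, if `(T_n)` satisfies `Res((λ_n), n, n+1)` then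
`‖x_{n+2} - x_{n+1}‖ ≤ β_n ‖x_{n+1} - x_n‖ + 2 K_z (|α_{n+1} - α_n| + (1-α_{n+1})|1 - λ_{n+1}/λ_n|)`
where `β_n = 1 - (1-α) α_{n+1}`. -/
theorem genVAM_consecutive_estimate {X : Type*} [NormedAddCommGroup X] [NormedSpace ℝ X]
    (C : Set X) (hCne : C.Nonempty) (hC : Convex ℝ C)
    (f : X → X) (α : ℝ) (hα0 : 0 ≤ α) (hα1 : α < 1)
    (hfC : ∀ x ∈ C, f x ∈ C)
    (hf : ∀ x ∈ C, ∀ y ∈ C, ‖f x - f y‖ ≤ α * ‖x - y‖)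
    (T : ℕ → X → X) (hTC : ∀ n, ∀ x ∈ C, T n x ∈ C)
    (hT : ∀ n, ∀ x ∈ C, ∀ y ∈ C, ‖T n x - T n y‖ ≤ ‖x - y‖)
    (z : X) (hz : z ∈ C) (hzfix : ∀ n, T n z = z)
    (a : ℕ → ℝ) (ha : ∀ n, a n ∈ Set.Icc (0 : ℝ) 1)
    (x : ℕ → X) (hx0 : x 0 ∈ C)
    (hx : ∀ n, x (n + 1) = a n • f (x n) + (1 - a n) • T n (x n))
    (K : ℕ) (hK : 1 ≤ K)
    (hK1 : ‖x 0 - z‖ ≤ K) (hK2 : ‖f z - z‖ / (1 - α) ≤ K)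
    (lam : ℕ → ℝ) (hlam : ∀ n, 0 < lam n)
    (n : ℕ)
    (hRes : ∀ y ∈ C, ‖T n y - T (n + 1) y‖ ≤ |1 - lam (n + 1) / lam n| * ‖y - T n y‖) :
    ‖x (n + 2) - x (n + 1)‖ ≤ (1 - (1 - α) * a (n + 1)) * ‖x (n + 1) - x n‖ +
      2 * K * (|a (n + 1) - a n| + (1 - a (n + 1)) * |1 - lam (n + 1) / lam n|) := by
  have hα' : (0:ℝ) < 1 - α := by linarith
  have hfz : ‖f z - z‖ ≤ (1 - α) * K := by
    rw [div_le_iff₀ hα'] at hK2; linarith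
  -- boundedness and membership
  have hmem : ∀ m, x m ∈ C ∧ ‖x m - z‖ ≤ K := by
    intro m
    induction m with
    | zero => exact ⟨hx0, hK1⟩
    | succ m ih =>
      obtain ⟨hmC, hmK⟩ := ih
      have ham := ha m
      have hfm := hfC _ hmC
      have hTm := hTC m _ hmC
      have hTb : ‖T m (x m) - z‖ ≤ ‖x m - z‖ := by
        have := hT m _ hmC _ hz
        rwa [hzfix m] at this
      have hfb : ‖f (x m) - z‖ ≤ α * ‖x m - z‖ + (1 - α) * K :=
        calc ‖f (x m) - z‖ ≤ ‖f (x m) - f z‖ + ‖f z - z‖ := norm_sub_le_norm_sub_add_norm_sub _ _ _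
          _ ≤ α * ‖x m - z‖ + (1 - α) * K := by
            have := hf _ hmC _ hz; linarith
      refine ⟨?_, ?_⟩
      · rw [hx]
        exact hC hfm hTm ham.1 (by linarith [ham.2]) (by ring)
      · rw [hx]
        have key : a m • f (x m) + (1 - a m) • T m (x m) - z
            = a m • (f (x m) - z) + (1 - a m) • (T m (x m) - z) := by module
        rw [key]
        calc ‖a m • (f (x m) - z) + (1 - a m) • (T m (x m) - z)‖
            ≤ ‖a m • (f (x m) - z)‖ + ‖(1 - a m) • (T m (x m) - z)‖ := norm_add_le _ _
          _ = a m * ‖f (x m) - z‖ + (1 - a m) * ‖T m (x m) - z‖ := by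
              rw [norm_smul, norm_smul, Real.norm_eq_abs, Real.norm_eq_abs,
                abs_of_nonneg ham.1, abs_of_nonneg (by linarith [ham.2])]
          _ ≤ K := by
              nlinarith [mul_le_mul_of_nonneg_left hfb ham.1,
                mul_le_mul_of_nonneg_left (hTb.trans hmK) (show (0:ℝ) ≤ 1 - a m by linarith [ham.2]),
                mul_le_mul_of_nonneg_left hmK (mul_nonneg ham.1 hα0)]
  obtain ⟨hnC, hnK⟩ := hmem n
  obtain ⟨hn1C, hn1K⟩ := hmem (n + 1)
  have ha1 := ha (n + 1)
  have ha0 := ha n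
  set L := |1 - lam (n + 1) / lam n| with hL
  have hL0 : 0 ≤ L := abs_nonneg _
  have hK0 : (0:ℝ) ≤ K := by positivity
  set d := ‖x (n + 1) - x n‖ with hd
  -- key decomposition
  have key : x (n + 2) - x (n + 1)
      = a (n + 1) • (f (x (n + 1)) - f (x n))
        + (a (n + 1) - a n) • (f (x n) - T n (x n))
        + (1 - a (n + 1)) • (T (n + 1) (x (n + 1)) - T n (x n)) := by
    have h1 := hx (n + 1)
    have h2 := hx n
    rw [show n + 2 = (n + 1) + 1 from rfl, h1, h2]
    module
  -- bound the pieces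
  have b1 : ‖f (x (n + 1)) - f (x n)‖ ≤ α * d := hf _ hn1C _ hnC
  have bxT : ‖x n - T n (x n)‖ ≤ 2 * K := by
    have h1 : ‖T n (x n) - z‖ ≤ ‖x n - z‖ := by
      have := hT n _ hnC _ hz; rwa [hzfix n] at this
    calc ‖x n - T n (x n)‖ ≤ ‖x n - z‖ + ‖z - T n (x n)‖ := norm_sub_le_norm_sub_add_norm_sub _ _ _
      _ = ‖x n - z‖ + ‖T n (x n) - z‖ := by rw [norm_sub_rev z]
      _ ≤ 2 * K := by linarith
  have b2 : ‖f (x n) - T n (x n)‖ ≤ 2 * K := by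
    have h1 : ‖T n (x n) - z‖ ≤ ‖x n - z‖ := by
      have := hT n _ hnC _ hz; rwa [hzfix n] at this
    have h2 : ‖f (x n) - z‖ ≤ α * ‖x n - z‖ + (1 - α) * K :=
      calc ‖f (x n) - z‖ ≤ ‖f (x n) - f z‖ + ‖f z - z‖ := norm_sub_le_norm_sub_add_norm_sub _ _ _
        _ ≤ α * ‖x n - z‖ + (1 - α) * K := by have := hf _ hnC _ hz; linarith
    calc ‖f (x n) - T n (x n)‖ ≤ ‖f (x n) - z‖ + ‖z - T n (x n)‖ :=
          norm_sub_le_norm_sub_add_norm_sub _ _ _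
      _ = ‖f (x n) - z‖ + ‖T n (x n) - z‖ := by rw [norm_sub_rev z]
      _ ≤ 2 * K := by nlinarith
  have b3 : ‖T (n + 1) (x (n + 1)) - T n (x n)‖ ≤ d + L * (2 * K) := by
    calc ‖T (n + 1) (x (n + 1)) - T n (x n)‖
        ≤ ‖T (n + 1) (x (n + 1)) - T (n + 1) (x n)‖ + ‖T (n + 1) (x n) - T n (x n)‖ :=
          norm_sub_le_norm_sub_add_norm_sub _ _ _
      _ ≤ d + L * (2 * K) := by
          have h1 := hT (n + 1) _ hn1C _ hnC
          have h2 : ‖T (n + 1) (x n) - T n (x n)‖ ≤ L * ‖x n - T n (x n)‖ := by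
            rw [norm_sub_rev]; exact hRes _ hnC
          have h3 : L * ‖x n - T n (x n)‖ ≤ L * (2 * K) := by
            exact mul_le_mul_of_nonneg_left bxT hL0
          linarith
  rw [key]
  calc ‖a (n + 1) • (f (x (n + 1)) - f (x n))
        + (a (n + 1) - a n) • (f (x n) - T n (x n))
        + (1 - a (n + 1)) • (T (n + 1) (x (n + 1)) - T n (x n))‖
      ≤ ‖a (n + 1) • (f (x (n + 1)) - f (x n))‖
        + ‖(a (n + 1) - a n) • (f (x n) - T n (x n))‖
        + ‖(1 - a (n + 1)) • (T (n + 1) (x (n + 1)) - T n (x n))‖ :=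
        norm_add₃_le
    _ = a (n + 1) * ‖f (x (n + 1)) - f (x n)‖
        + |a (n + 1) - a n| * ‖f (x n) - T n (x n)‖
        + (1 - a (n + 1)) * ‖T (n + 1) (x (n + 1)) - T n (x n)‖ := by
        rw [norm_smul, norm_smul, norm_smul, Real.norm_eq_abs, Real.norm_eq_abs,
          Real.norm_eq_abs, abs_of_nonneg ha1.1, abs_of_nonneg (by linarith [ha1.2] : (0:ℝ) ≤ 1 - a (n + 1))]
    _ ≤ a (n + 1) * (α * d) + |a (n + 1) - a n| * (2 * K)
        + (1 - a (n + 1)) * (d + L * (2 * K)) := by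
        have t1 := mul_le_mul_of_nonneg_left b1 ha1.1
        have t2 := mul_le_mul_of_nonneg_left b2 (abs_nonneg (a (n + 1) - a n))
        have t3 := mul_le_mul_of_nonneg_left b3 (by linarith [ha1.2] : (0:ℝ) ≤ 1 - a (n + 1))
        linarith
    _ = (1 - (1 - α) * a (n + 1)) * d
        + 2 * K * (|a (n + 1) - a n| + (1 - a (n + 1)) * L) := by ring
end

section
/- In the genVAM setting in a real normed space, let (λ_n) ⊆ (0,∞) and assume: (T_n) satisfies Res((λ_n), n, n+1) for all n ∈ ℕ; Σ_{n=0}^∞ α_n diverges with rate of divergence σ₁; Σ_{n=0}^∞ |α_n - α_{n+1}| converges with Cauchy modulus σ₂; and Σ_{n=0}^∞ |1 - λ_{n+1}/λ_n| converges with Cauchy modulus θ₁. Then (x_n) is asymptotically regular with rate Φ(k) = σ₁⁺(⌈(χ(2k+1) + 1 + ⌈ln(4K_z(k+1))⌉)/(1-α)⌉ + 1), where χ(k) = max{σ₂(4K_z(k+1) - 1), θ₁(4K_z(k+1) - 1)} and σ₁⁺(n) = max{σ₁(i) : 0 ≤ i ≤ n}; that is, ‖x_{n+1} - x_n‖ ≤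 1/(k+1) for all k, n ∈ ℕ with n ≥ Φ(k). -/
theorem genVAM_aux_iter (α : ℝ) (hα0 : 0 ≤ α) (hα1 : α < 1) (a c d : ℕ → ℝ)
    (ha : ∀ n, a n ∈ Set.Icc (0:ℝ) 1)
    (hcnn : ∀ i, 0 ≤ c i) (hd0 : ∀ i, 0 ≤ d i)
    (hE : ∀ m, d (m+1) ≤ (1 - (1-α) * a (m+1)) * d m + c m) :
    ∀ N p : ℕ, d (N+1+p) ≤
      (∏ i ∈ Finset.range p, (1 - (1-α) * a (N+1+i+1))) * d (N+1)
      + ∑ i ∈ Finset.range p, c (N+1+i) := by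
  intro N p
  induction p with
  | zero => simp
  | succ p ih =>
    have hβ0 : (0:ℝ) ≤ 1 - (1-α) * a (N+1+p+1) := by
      have h1 := (ha (N+1+p+1)).2
      have h2 := (ha (N+1+p+1)).1
      nlinarith
    have hP0 : (0:ℝ) ≤ ∏ i ∈ Finset.range p, (1 - (1-α) * a (N+1+i+1)) := by
      apply Finset.prod_nonneg
      intro i _
      have h1 := (ha (N+1+i+1)).2
      have h2 := (ha (N+1+i+1)).1
      nlinarith
    have hS0 : (0:ℝ) ≤ ∑ i ∈ Finset.range p, c (N+1+i) :=
      Finset.sum_nonneg fun i _ => hcnn _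
    rw [Finset.prod_range_succ, Finset.sum_range_succ]
    have key : d (N+1+p+1) ≤ (1 - (1-α) * a (N+1+p+1)) * d (N+1+p) + c (N+1+p) := hE (N+1+p)
    have h2 := mul_le_mul_of_nonneg_left ih hβ0
    have h6 : (1 - (1-α) * a (N+1+p+1)) * (∑ i ∈ Finset.range p, c (N+1+i))
        ≤ ∑ i ∈ Finset.range p, c (N+1+i) := by
      have hs : (0:ℝ) ≤ (1-α) * a (N+1+p+1) :=
        mul_nonneg (by linarith) (ha (N+1+p+1)).1
      nlinarith
    have h5 : (1 - (1-α) * a (N+1+p+1)) *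
        ((∏ i ∈ Finset.range p, (1 - (1-α) * a (N+1+i+1))) * d (N+1)
          + ∑ i ∈ Finset.range p, c (N+1+i))
        = (∏ i ∈ Finset.range p, (1 - (1-α) * a (N+1+i+1)))
            * (1 - (1-α) * a (N+1+p+1)) * d (N+1)
          + (1 - (1-α) * a (N+1+p+1)) * (∑ i ∈ Finset.range p, c (N+1+i)) := by ring
    calc d (N+1+(p+1)) ≤ (1 - (1-α) * a (N+1+p+1)) * d (N+1+p) + c (N+1+p) := key
      _ ≤ (∏ i ∈ Finset.range p, (1 - (1-α) * a (N+1+i+1))) * (1 - (1-α) * a (N+1+p+1))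
            * d (N+1) + (∑ i ∈ Finset.range p, c (N+1+i) + c (N+1+p)) := by linarith


set_option maxHeartbeats 2000000 in
/-- Quantitative asymptotic regularity of the genVAM iteration: under `Res((λ_n), n, n+1)`
and quantitative hypotheses (H1α_n), (H2α_n), (H1λ_n), the iteration `(x_n)` is
asymptotically regular with rate
`Φ(k) = σ₁⁺(⌈(χ(2k+1) + 1 + ⌈ln(4K_z(k+1))⌉)/(1-α)⌉ + 1)`, where
`χ(k) = max {σ₂(4K_z(k+1)-1), θ₁(4K_z(k+1)-1)}` and `σ₁⁺(n) = max {σ₁(i) : i ≤ n}`. -/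
theorem genVAM_rate_of_asymptotic_regularity {X : Type*} [NormedAddCommGroup X]
    [NormedSpace ℝ X]
    (C : Set X) (hCne : C.Nonempty) (hC : Convex ℝ C)
    (f : X → X) (α : ℝ) (hα0 : 0 ≤ α) (hα1 : α < 1)
    (hfC : ∀ x ∈ C, f x ∈ C)
    (hf : ∀ x ∈ C, ∀ y ∈ C, ‖f x - f y‖ ≤ α * ‖x - y‖)
    (T : ℕ → X → X) (hTC : ∀ n, ∀ x ∈ C, T n x ∈ C)
    (hT : ∀ n, ∀ x ∈ C, ∀ y ∈ C, ‖T n x - T n y‖ ≤ ‖x - y‖)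
    (z : X) (hz : z ∈ C) (hzfix : ∀ n, T n z = z)
    (a : ℕ → ℝ) (ha : ∀ n, a n ∈ Set.Icc (0 : ℝ) 1)
    (x : ℕ → X) (hx0 : x 0 ∈ C)
    (hx : ∀ n, x (n + 1) = a n • f (x n) + (1 - a n) • T n (x n))
    (K : ℕ) (hK : 1 ≤ K)
    (hK1 : ‖x 0 - z‖ ≤ K) (hK2 : ‖f z - z‖ / (1 - α) ≤ K)
    (lam : ℕ → ℝ) (hlam : ∀ n, 0 < lam n)
    (hRes : ∀ n : ℕ, ∀ y ∈ C, ‖T n y - T (n + 1) y‖ ≤ |1 - lam (n + 1) / lam n| * ‖y - T n y‖)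
    (σ₁ : ℕ → ℕ) (hσ₁ : ∀ n : ℕ, (n : ℝ) ≤ ∑ i ∈ Finset.range (σ₁ n + 1), a i)
    (σ₂ : ℕ → ℕ)
    (hσ₂ : ∀ k n : ℕ, σ₂ k ≤ n → ∀ p : ℕ,
      ∑ i ∈ Finset.Icc (n + 1) (n + p), |a i - a (i + 1)| ≤ 1 / ((k : ℝ) + 1))
    (θ₁ : ℕ → ℕ)
    (hθ₁ : ∀ k n : ℕ, θ₁ k ≤ n → ∀ p : ℕ,
      ∑ i ∈ Finset.Icc (n + 1) (n + p), |1 - lam (i + 1) / lam i| ≤ 1 / ((k : ℝ) + 1)) :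
    ∀ k n : ℕ,
      (Finset.range
        (Nat.ceil ((((max (σ₂ (4 * K * (2 * k + 1 + 1) - 1)) (θ₁ (4 * K * (2 * k + 1 + 1) - 1))
            + 1 + Nat.ceil (Real.log (4 * (K : ℝ) * ((k : ℝ) + 1))) : ℕ) : ℝ)) / (1 - α))
          + 1 + 1)).sup σ₁ ≤ n →
      ‖x (n + 1) - x n‖ ≤ 1 / ((k : ℝ) + 1) := by
  intro k n hn
  have hKr1 : (1:ℝ) ≤ (K:ℝ) := by exact_mod_cast hK
  have hKpos : (0:ℝ) < (K:ℝ) := by linarith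
  have h1α : (0:ℝ) < 1 - α := by linarith
  have hfz : ‖f z - z‖ ≤ (1 - α) * K := by
    rw [div_le_iff₀ h1α] at hK2; linarith
  -- membership
  have hxC : ∀ m, x m ∈ C := by
    intro m
    induction m with
    | zero => exact hx0
    | succ m ih =>
      rw [hx m]
      exact hC (hfC _ ih) (hTC m _ ih) (ha m).1 (by linarith [(ha m).2]) (by ring)
  -- basic bounds
  have hfb : ∀ m, ‖f (x m) - z‖ ≤ α * ‖x m - z‖ + (1 - α) * K := by
    intro m
    calc ‖f (x m) - z‖ ≤ ‖f (x m) - f z‖ + ‖f z - z‖ := by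
          simpa using norm_add_le (f (x m) - f z) (f z - z)
      _ ≤ α * ‖x m - z‖ + (1 - α) * K := by
          have := hf (x m) (hxC m) z hz; linarith
  have hB : ∀ m, ‖x m - z‖ ≤ K := by
    intro m
    induction m with
    | zero => exact hK1
    | succ m ih =>
      have key : x (m+1) - z = a m • (f (x m) - z) + (1 - a m) • (T m (x m) - z) := by
        rw [hx m]; module
      have h1 : ‖x (m+1) - z‖ ≤ a m * ‖f (x m) - z‖ + (1 - a m) * ‖T m (x m) - z‖ := by
        rw [key]
        calc ‖a m • (f (x m) - z) + (1 - a m) • (T m (x m) - z)‖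
            ≤ ‖a m • (f (x m) - z)‖ + ‖(1 - a m) • (T m (x m) - z)‖ := norm_add_le _ _
          _ = a m * ‖f (x m) - z‖ + (1 - a m) * ‖T m (x m) - z‖ := by
              rw [norm_smul, norm_smul, Real.norm_of_nonneg (ha m).1,
                Real.norm_of_nonneg (by linarith [(ha m).2] : (0:ℝ) ≤ 1 - a m)]
      have hT' : ‖T m (x m) - z‖ ≤ ‖x m - z‖ := by
        have := hT m (x m) (hxC m) z hz; rwa [hzfix m] at this
      have hfK : ‖f (x m) - z‖ ≤ K := by
        nlinarith [hfb m, mul_le_mul_of_nonneg_left ih hα0]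
      nlinarith [(ha m).1, (ha m).2, mul_le_mul_of_nonneg_left hfK (ha m).1,
        mul_le_mul_of_nonneg_left (le_trans hT' ih)
          (by linarith [(ha m).2] : (0:ℝ) ≤ 1 - a m)]
  have hfK : ∀ m, ‖f (x m) - z‖ ≤ K := by
    intro m; nlinarith [hfb m, mul_le_mul_of_nonneg_left (hB m) hα0]
  have hTz : ∀ j m, ‖T j (x m) - z‖ ≤ K := by
    intro j m
    have := hT j (x m) (hxC m) z hz; rw [hzfix j] at this
    exact le_trans this (hB m)
  have hd2K : ∀ m, ‖x (m+1) - x m‖ ≤ 2*K := by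
    intro m
    calc ‖x (m+1) - x m‖ = ‖(x (m+1) - z) - (x m - z)‖ := by rw [sub_sub_sub_cancel_right]
      _ ≤ ‖x (m+1) - z‖ + ‖x m - z‖ := norm_sub_le _ _
      _ ≤ 2*K := by linarith [hB (m+1), hB m]
  have hTb : ∀ m, ‖x m - T m (x m)‖ ≤ 2*K := by
    intro m
    calc ‖x m - T m (x m)‖ = ‖(x m - z) - (T m (x m) - z)‖ := by rw [sub_sub_sub_cancel_right]
      _ ≤ ‖x m - z‖ + ‖T m (x m) - z‖ := norm_sub_le _ _
      _ ≤ 2*K := by linarith [hB m, hTz m m]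
  have hfTb : ∀ m, ‖f (x m) - T m (x m)‖ ≤ 2*K := by
    intro m
    calc ‖f (x m) - T m (x m)‖ = ‖(f (x m) - z) - (T m (x m) - z)‖ := by
          rw [sub_sub_sub_cancel_right]
      _ ≤ ‖f (x m) - z‖ + ‖T m (x m) - z‖ := norm_sub_le _ _
      _ ≤ 2*K := by linarith [hfK m, hTz m m]
  -- the error terms
  obtain ⟨c, hc⟩ : ∃ c : ℕ → ℝ, ∀ i,
      c i = 2*(K:ℝ)*(|a i - a (i+1)| + |1 - lam (i+1)/lam i|) := ⟨_, fun _ => rfl⟩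
  have hcnn : ∀ i, 0 ≤ c i := by
    intro i
    rw [hc i]
    have h1 : (0:ℝ) ≤ |a i - a (i+1)| + |1 - lam (i+1)/lam i| :=
      add_nonneg (abs_nonneg _) (abs_nonneg _)
    nlinarith
  -- the key recurrence
  have hE : ∀ m, ‖x (m+2) - x (m+1)‖ ≤
      (1 - (1-α) * a (m+1)) * ‖x (m+1) - x m‖ + c m := by
    intro m
    have key : x (m+2) - x (m+1) =
        a (m+1) • (f (x (m+1)) - f (x m))
        + (1 - a (m+1)) • (T (m+1) (x (m+1)) - T (m+1) (x m))
        + (1 - a (m+1)) • (T (m+1) (x m) - T m (x m))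
        + (a (m+1) - a m) • (f (x m) - T m (x m)) := by
      rw [show m+2 = (m+1)+1 from rfl, hx (m+1), hx m]; module
    have t1 : ‖f (x (m+1)) - f (x m)‖ ≤ α * ‖x (m+1) - x m‖ := hf _ (hxC _) _ (hxC _)
    have t2 : ‖T (m+1) (x (m+1)) - T (m+1) (x m)‖ ≤ ‖x (m+1) - x m‖ := hT _ _ (hxC _) _ (hxC _)
    have t3 : ‖T (m+1) (x m) - T m (x m)‖ ≤ |1 - lam (m+1) / lam m| * (2*K) := by
      rw [norm_sub_rev]
      calc ‖T m (x m) - T (m+1) (x m)‖ ≤ |1 - lam (m+1) / lam m| * ‖x m - T m (x m)‖ :=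
            hRes m (x m) (hxC m)
        _ ≤ |1 - lam (m+1) / lam m| * (2*K) :=
            mul_le_mul_of_nonneg_left (hTb m) (abs_nonneg _)
    have t4 : ‖f (x m) - T m (x m)‖ ≤ 2*K := hfTb m
    have ha0 := (ha m).1
    have ha1 := (ha m).2
    have hb0 := (ha (m+1)).1
    have hb1 := (ha (m+1)).2
    have tri : ‖x (m+2) - x (m+1)‖ ≤
        a (m+1) * ‖f (x (m+1)) - f (x m)‖
        + (1 - a (m+1)) * ‖T (m+1) (x (m+1)) - T (m+1) (x m)‖
        + (1 - a (m+1)) * ‖T (m+1) (x m) - T m (x m)‖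
        + |a (m+1) - a m| * ‖f (x m) - T m (x m)‖ := by
      rw [key]
      have n1 := norm_add_le
        (a (m+1) • (f (x (m+1)) - f (x m))
          + (1 - a (m+1)) • (T (m+1) (x (m+1)) - T (m+1) (x m))
          + (1 - a (m+1)) • (T (m+1) (x m) - T m (x m)))
        ((a (m+1) - a m) • (f (x m) - T m (x m)))
      have n2 := norm_add_le
        (a (m+1) • (f (x (m+1)) - f (x m))
          + (1 - a (m+1)) • (T (m+1) (x (m+1)) - T (m+1) (x m)))
        ((1 - a (m+1)) • (T (m+1) (x m) - T m (x m)))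
      have n3 := norm_add_le (a (m+1) • (f (x (m+1)) - f (x m)))
        ((1 - a (m+1)) • (T (m+1) (x (m+1)) - T (m+1) (x m)))
      have e1 : ‖a (m+1) • (f (x (m+1)) - f (x m))‖ = a (m+1) * ‖f (x (m+1)) - f (x m)‖ := by
        rw [norm_smul, Real.norm_of_nonneg hb0]
      have e2 : ‖(1 - a (m+1)) • (T (m+1) (x (m+1)) - T (m+1) (x m))‖
          = (1 - a (m+1)) * ‖T (m+1) (x (m+1)) - T (m+1) (x m)‖ := by
        rw [norm_smul, Real.norm_of_nonneg (by linarith : (0:ℝ) ≤ 1 - a (m+1))]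
      have e3 : ‖(1 - a (m+1)) • (T (m+1) (x m) - T m (x m))‖
          = (1 - a (m+1)) * ‖T (m+1) (x m) - T m (x m)‖ := by
        rw [norm_smul, Real.norm_of_nonneg (by linarith : (0:ℝ) ≤ 1 - a (m+1))]
      have e4 : ‖(a (m+1) - a m) • (f (x m) - T m (x m))‖
          = |a (m+1) - a m| * ‖f (x m) - T m (x m)‖ := by
        rw [norm_smul, Real.norm_eq_abs]
      linarith [n1, n2, n3, e1, e2, e3, e4]
    have habs : |a (m+1) - a m| = |a m - a (m+1)| := abs_sub_comm _ _
    have hlb : (0:ℝ) ≤ |1 - lam (m+1) / lam m| := abs_nonneg _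
    have hanb : (0:ℝ) ≤ |a (m+1) - a m| := abs_nonneg _
    have s1 : a (m+1) * ‖f (x (m+1)) - f (x m)‖ ≤ a (m+1) * (α * ‖x (m+1) - x m‖) :=
      mul_le_mul_of_nonneg_left t1 hb0
    have s2 : (1 - a (m+1)) * ‖T (m+1) (x (m+1)) - T (m+1) (x m)‖
        ≤ (1 - a (m+1)) * ‖x (m+1) - x m‖ :=
      mul_le_mul_of_nonneg_left t2 (by linarith)
    have s3 : (1 - a (m+1)) * ‖T (m+1) (x m) - T m (x m)‖
        ≤ |1 - lam (m+1) / lam m| * (2*K) := by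
      calc (1 - a (m+1)) * ‖T (m+1) (x m) - T m (x m)‖
          ≤ 1 * ‖T (m+1) (x m) - T m (x m)‖ :=
            mul_le_mul_of_nonneg_right (by linarith) (norm_nonneg _)
        _ = ‖T (m+1) (x m) - T m (x m)‖ := one_mul _
        _ ≤ |1 - lam (m+1) / lam m| * (2*K) := t3
    have s4 : |a (m+1) - a m| * ‖f (x m) - T m (x m)‖ ≤ |a m - a (m+1)| * (2*K) := by
      rw [← habs]; exact mul_le_mul_of_nonneg_left t4 hanb
    rw [hc m]
    linarith [tri, s1, s2, s3, s4]
  have hF := genVAM_aux_iter α hα0 hα1 a c (fun m => ‖x (m+1) - x m‖) ha hcnn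
    (fun i => norm_nonneg _) hE
  -- notation
  obtain ⟨K4, hK4⟩ : ∃ m : ℕ, 4 * K * (2 * k + 1 + 1) - 1 = m := ⟨_, rfl⟩
  rw [hK4] at hn
  obtain ⟨N, hNdef⟩ : ∃ m : ℕ, max (σ₂ K4) (θ₁ K4) = m := ⟨_, rfl⟩
  rw [hNdef] at hn
  obtain ⟨L, hLdef⟩ : ∃ m : ℕ, Nat.ceil (Real.log (4 * (K : ℝ) * ((k : ℝ) + 1))) = m := ⟨_, rfl⟩
  rw [hLdef] at hn
  obtain ⟨M, hMdef⟩ : ∃ m : ℕ, Nat.ceil (((N + 1 + L : ℕ) : ℝ) / (1 - α)) = m := ⟨_, rfl⟩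
  rw [hMdef] at hn
  have hσn : σ₁ (M + 1) ≤ n :=
    le_trans (Finset.le_sup (Finset.self_mem_range_succ (M+1))) hn
  have hub : ∀ m : ℕ, ∑ i ∈ Finset.range m, a i ≤ (m : ℝ) := by
    intro m
    calc ∑ i ∈ Finset.range m, a i ≤ ∑ _i ∈ Finset.range m, (1:ℝ) :=
          Finset.sum_le_sum (fun i _ => (ha i).2)
      _ = (m : ℝ) := by simp
  have hMle : M ≤ σ₁ (M+1) := by
    have h1 := hσ₁ (M+1)
    have h2 := hub (σ₁ (M+1) + 1)
    have : ((M:ℝ)+1) ≤ ((σ₁ (M+1) : ℝ) + 1) := by push_cast at h1 h2 ⊢; linarith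
    exact_mod_cast (by linarith : (M:ℝ) ≤ (σ₁ (M+1) : ℝ))
  have hL1 : 1 ≤ L := by
    rw [← hLdef]
    have : (0:ℝ) < Real.log (4 * (K : ℝ) * ((k : ℝ) + 1)) := by
      apply Real.log_pos
      have hk0 : (0:ℝ) ≤ (k:ℝ) := Nat.cast_nonneg k
      have h4 : (1:ℝ)*1 ≤ (K:ℝ)*((k:ℝ)+1) :=
        mul_le_mul hKr1 (by linarith) (by norm_num) (by linarith)
      linarith
    exact Nat.one_le_iff_ne_zero.mpr (by positivity)
  have hMreal : ((N + 1 + L : ℕ) : ℝ) / (1 - α) ≤ (M : ℝ) := by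
    rw [← hMdef]; exact Nat.le_ceil _
  have hNM : N + 2 ≤ M := by
    have h1 : ((N + 1 + L : ℕ) : ℝ) ≤ ((N + 1 + L : ℕ) : ℝ) / (1 - α) := by
      rw [le_div_iff₀ h1α]
      have h0 : (0:ℝ) ≤ ((N + 1 + L : ℕ) : ℝ) := Nat.cast_nonneg _
      have hm : (0:ℝ) ≤ ((N + 1 + L : ℕ) : ℝ) * α := mul_nonneg h0 hα0
      linarith [hm]
    have h2 : ((N + 1 + L : ℕ) : ℝ) ≤ (M : ℝ) := le_trans h1 hMreal
    have h3 : N + 1 + L ≤ M := by exact_mod_cast h2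
    omega
  have hnN : N + 2 ≤ n := le_trans hNM (le_trans hMle hσn)
  obtain ⟨p, hp⟩ : ∃ p, n = N + 1 + p := ⟨n - (N+1), by omega⟩
  subst hp
  -- cast value of K4
  have hK4c : ((K4 : ℕ) : ℝ) + 1 = 4 * (K:ℝ) * (2*(k:ℝ)+2) := by
    have h1 : (1:ℕ) ≤ 4 * K * (2 * k + 1 + 1) := by
      calc (1:ℕ) = 1 * 1 := rfl
        _ ≤ (4*K) * (2*k+1+1) := Nat.mul_le_mul (by omega) (by omega)
    rw [← hK4]
    push_cast [Nat.cast_sub h1]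
    ring
  -- bound on the error sum
  have hA := hσ₂ K4 N (hNdef ▸ le_max_left _ _) p
  have hB' := hθ₁ K4 N (hNdef ▸ le_max_right _ _) p
  have eA : ∑ i ∈ Finset.Icc (N+1) (N+p), |a i - a (i+1)|
      = ∑ i ∈ Finset.range p, |a (N+1+i) - a (N+1+i+1)| := by
    rw [← Finset.Ico_add_one_right_eq_Icc, Finset.sum_Ico_eq_sum_range]
    apply Finset.sum_congr
    · congr 1; omega
    · intro i _; congr 2 <;> omega
  have eB : ∑ i ∈ Finset.Icc (N+1) (N+p), |1 - lam (i+1) / lam i|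
      = ∑ i ∈ Finset.range p, |1 - lam (N+1+i+1) / lam (N+1+i)| := by
    rw [← Finset.Ico_add_one_right_eq_Icc, Finset.sum_Ico_eq_sum_range]
    apply Finset.sum_congr
    · congr 1; omega
    · intro i _; congr 3 <;> omega
  have hcs : ∑ i ∈ Finset.range p, c (N+1+i)
      = 2*(K:ℝ) * ((∑ i ∈ Finset.range p, |a (N+1+i) - a (N+1+i+1)|)
        + ∑ i ∈ Finset.range p, |1 - lam (N+1+i+1) / lam (N+1+i)|) := by
    rw [← Finset.sum_add_distrib, Finset.mul_sum]
    exact Finset.sum_congr rfl fun i _ => hc _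
  have hsumc : ∑ i ∈ Finset.range p, c (N+1+i) ≤ 1 / (2*((k:ℝ)+1)) := by
    rw [hcs]
    rw [eA] at hA
    rw [eB] at hB'
    rw [hK4c] at hA hB'
    have hpos : (0:ℝ) < 4 * (K:ℝ) * (2*(k:ℝ)+2) :=
      mul_pos (by linarith) (by positivity)
    have key : 2*(K:ℝ) * (1 / (4 * (K:ℝ) * (2*(k:ℝ)+2)) + 1 / (4 * (K:ℝ) * (2*(k:ℝ)+2)))
        = 1 / (2*((k:ℝ)+1)) := by
      field_simp
      ring
    calc 2*(K:ℝ) * ((∑ i ∈ Finset.range p, |a (N+1+i) - a (N+1+i+1)|)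
          + ∑ i ∈ Finset.range p, |1 - lam (N+1+i+1) / lam (N+1+i)|)
        ≤ 2*(K:ℝ) * (1 / (4 * (K:ℝ) * (2*(k:ℝ)+2)) + 1 / (4 * (K:ℝ) * (2*(k:ℝ)+2))) := by
          apply mul_le_mul_of_nonneg_left _ (by positivity)
          exact add_le_add hA hB'
      _ = 1 / (2*((k:ℝ)+1)) := key
  -- bound on the product
  have hprod : (∏ i ∈ Finset.range p, (1 - (1-α) * a (N+1+i+1)))
      ≤ Real.exp (-((1-α) * ∑ i ∈ Finset.range p, a (N+1+i+1))) := by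
    calc (∏ i ∈ Finset.range p, (1 - (1-α) * a (N+1+i+1)))
        ≤ ∏ i ∈ Finset.range p, Real.exp (-((1-α) * a (N+1+i+1))) := by
          apply Finset.prod_le_prod
          · intro i _
            have h3 := mul_le_one₀ (by linarith : 1-α ≤ 1) (ha (N+1+i+1)).1
              (ha (N+1+i+1)).2
            linarith
          · intro i _
            have := Real.add_one_le_exp (-((1-α) * a (N+1+i+1)))
            linarith
      _ = Real.exp (∑ i ∈ Finset.range p, -((1-α) * a (N+1+i+1))) := (Real.exp_sum _ _).symm
      _ = Real.exp (-((1-α) * ∑ i ∈ Finset.range p, a (N+1+i+1))) := by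
          congr 1
          rw [Finset.mul_sum, ← Finset.sum_neg_distrib]
  -- lower bound on the a-sum
  have hsa : (M:ℝ) - ((N:ℝ)+1) ≤ ∑ i ∈ Finset.range p, a (N+1+i+1) := by
    have h1 : ∑ i ∈ Finset.range (N+2+p), a i
        = ∑ i ∈ Finset.range (N+2), a i + ∑ i ∈ Finset.range p, a (N+2+i) :=
      Finset.sum_range_add a (N+2) p
    have h2 : ∑ i ∈ Finset.range p, a (N+2+i) = ∑ i ∈ Finset.range p, a (N+1+i+1) :=
      Finset.sum_congr rfl fun i _ => by rw [show N+2+i = N+1+i+1 from by omega]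
    have h3 : ((M:ℝ)+1) ≤ ∑ i ∈ Finset.range (σ₁ (M+1) + 1), a i := by
      have := hσ₁ (M+1); push_cast at this ⊢; linarith
    have h4 : ∑ i ∈ Finset.range (σ₁ (M+1)+1), a i ≤ ∑ i ∈ Finset.range (N+2+p), a i :=
      Finset.sum_le_sum_of_subset_of_nonneg
        (Finset.range_subset_range.mpr (by omega)) (fun i _ _ => (ha i).1)
    have h5 := hub (N+2)
    push_cast at h5
    linarith [h1, h2, h3, h4]
  have hlog : Real.log (4 * (K:ℝ) * ((k:ℝ)+1))
      ≤ (1-α) * ∑ i ∈ Finset.range p, a (N+1+i+1) := by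
    have hLlog : Real.log (4 * (K:ℝ) * ((k:ℝ)+1)) ≤ (L:ℝ) := by
      rw [← hLdef]; exact Nat.le_ceil _
    have h1 : ((N:ℝ) + 1 + L) ≤ (1-α) * M := by
      have := mul_le_mul_of_nonneg_left hMreal (le_of_lt h1α)
      rw [mul_div_cancel₀ _ (ne_of_gt h1α)] at this
      push_cast at this ⊢
      linarith
    have h2 : (1-α) * ((N:ℝ)+1) ≤ (N:ℝ)+1 := by
      have hm : (0:ℝ) ≤ α * ((N:ℝ)+1) := mul_nonneg hα0 (by positivity)
      linarith
    have h3 := mul_le_mul_of_nonneg_left hsa (le_of_lt h1α)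
    have hm2 : (0:ℝ) ≤ α * ((N:ℝ)+1) := mul_nonneg hα0 (by positivity)
    linarith
  have hexp : Real.exp (-((1-α) * ∑ i ∈ Finset.range p, a (N+1+i+1)))
      ≤ (4 * (K:ℝ) * ((k:ℝ)+1))⁻¹ := by
    have h1 : Real.exp (-((1-α) * ∑ i ∈ Finset.range p, a (N+1+i+1)))
        ≤ Real.exp (-(Real.log (4 * (K:ℝ) * ((k:ℝ)+1)))) :=
      Real.exp_le_exp.mpr (by linarith)
    have hpos : (0:ℝ) < 4 * (K:ℝ) * ((k:ℝ)+1) :=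
      mul_pos (by linarith) (by positivity)
    have h2 : Real.exp (-(Real.log (4 * (K:ℝ) * ((k:ℝ)+1))))
        = (4 * (K:ℝ) * ((k:ℝ)+1))⁻¹ := by
      rw [Real.exp_neg, Real.exp_log hpos]
    exact h2 ▸ h1
  -- conclusion
  have hPD : (∏ i ∈ Finset.range p, (1 - (1-α) * a (N+1+i+1))) * ‖x (N+1+1) - x (N+1)‖
      ≤ 1 / (2*((k:ℝ)+1)) := by
    have hP0 : (0:ℝ) ≤ ∏ i ∈ Finset.range p, (1 - (1-α) * a (N+1+i+1)) := by
      apply Finset.prod_nonneg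
      intro i _
      have h3 := mul_le_one₀ (by linarith : 1-α ≤ 1) (ha (N+1+i+1)).1
        (ha (N+1+i+1)).2
      linarith
    have hpos : (0:ℝ) < 4 * (K:ℝ) * ((k:ℝ)+1) :=
      mul_pos (by linarith) (by positivity)
    have key : (4 * (K:ℝ) * ((k:ℝ)+1))⁻¹ * (2*(K:ℝ)) = 1 / (2*((k:ℝ)+1)) := by
      field_simp
      ring
    calc (∏ i ∈ Finset.range p, (1 - (1-α) * a (N+1+i+1))) * ‖x (N+1+1) - x (N+1)‖
        ≤ (4 * (K:ℝ) * ((k:ℝ)+1))⁻¹ * (2*(K:ℝ)) :=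
          mul_le_mul (le_trans hprod hexp) (hd2K (N+1)) (norm_nonneg _)
            (by positivity)
      _ = 1 / (2*((k:ℝ)+1)) := key
  have hfinal := hF N p
  have hhalf : 1 / (2*((k:ℝ)+1)) + 1 / (2*((k:ℝ)+1)) = 1 / ((k:ℝ)+1) := by
    have : (0:ℝ) < (k:ℝ)+1 := by positivity
    field_simp
    norm_num
  calc ‖x (N+1+p+1) - x (N+1+p)‖
      ≤ (∏ i ∈ Finset.range p, (1 - (1-α) * a (N+1+i+1))) * ‖x (N+1+1) - x (N+1)‖
        + ∑ i ∈ Finset.range p, c (N+1+i) := hfinal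
    _ ≤ 1 / (2*((k:ℝ)+1)) + 1 / (2*((k:ℝ)+1)) := add_le_add hPD hsumc
    _ = 1 / ((k:ℝ)+1) := hhalf
end

section
/- In the genVAM setting in a real normed space, let Φ be a rate of asymptotic regularity of (x_n) and assume α_n → 0 with rate of convergence σ₃. Then Ψ(k) = max{σ₃(4K_z(k+1) - 1), Φ(2k+1)} is a rate of (T_n)-asymptotic regularity of (x_n); that is, ‖x_n - T_n x_n‖ ≤ 1/(k+1) for all k, n ∈ ℕ with n ≥ Ψ(k). -/
/-- If `Φ` is a rate of asymptotic regularity of the genVAM iteration `(x_n)` and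
`α_n → 0` with rate `σ₃`, then `Ψ(k) = max {σ₃(4K_z(k+1)-1), Φ(2k+1)}` is a rate of
`(T_n)`-asymptotic regularity of `(x_n)`. -/
theorem genVAM_rate_of_Tn_asymptotic_regularity {X : Type*} [NormedAddCommGroup X]
    [NormedSpace ℝ X]
    (C : Set X) (hCne : C.Nonempty) (hC : Convex ℝ C)
    (f : X → X) (α : ℝ) (hα0 : 0 ≤ α) (hα1 : α < 1)
    (hfC : ∀ x ∈ C, f x ∈ C)
    (hf : ∀ x ∈ C, ∀ y ∈ C, ‖f x - f y‖ ≤ α * ‖x - y‖)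
    (T : ℕ → X → X) (hTC : ∀ n, ∀ x ∈ C, T n x ∈ C)
    (hT : ∀ n, ∀ x ∈ C, ∀ y ∈ C, ‖T n x - T n y‖ ≤ ‖x - y‖)
    (z : X) (hz : z ∈ C) (hzfix : ∀ n, T n z = z)
    (a : ℕ → ℝ) (ha : ∀ n, a n ∈ Set.Icc (0 : ℝ) 1)
    (x : ℕ → X) (hx0 : x 0 ∈ C)
    (hx : ∀ n, x (n + 1) = a n • f (x n) + (1 - a n) • T n (x n))
    (K : ℕ) (hK : 1 ≤ K)
    (hK1 : ‖x 0 - z‖ ≤ K) (hK2 : ‖f z - z‖ / (1 - α) ≤ K)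
    (Φ : ℕ → ℕ) (hΦ : ∀ k n : ℕ, Φ k ≤ n → ‖x (n + 1) - x n‖ ≤ 1 / ((k : ℝ) + 1))
    (σ₃ : ℕ → ℕ) (hσ₃ : ∀ k n : ℕ, σ₃ k ≤ n → a n ≤ 1 / ((k : ℝ) + 1)) :
    ∀ k n : ℕ, max (σ₃ (4 * K * (k + 1) - 1)) (Φ (2 * k + 1)) ≤ n →
      ‖x n - T n (x n)‖ ≤ 1 / ((k : ℝ) + 1) := by
  have hα' : (0:ℝ) < 1 - α := by linarith
  have hKpos : (0:ℝ) < K := by exact_mod_cast hK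
  have hfz : ‖f z - z‖ ≤ (1 - α) * K := by
    rw [div_le_iff₀ hα'] at hK2; linarith
  have key : ∀ n, x n ∈ C ∧ ‖x n - z‖ ≤ K := by
    intro n
    induction n with
    | zero => exact ⟨hx0, hK1⟩
    | succ n ih =>
      obtain ⟨hxC, hxK⟩ := ih
      obtain ⟨ha0, ha1⟩ := ha n
      have hfx : f (x n) ∈ C := hfC _ hxC
      have hTx : T n (x n) ∈ C := hTC n _ hxC
      have hfxz : ‖f (x n) - z‖ ≤ K := by
        have h1 : f (x n) - z = (f (x n) - f z) + (f z - z) := by abel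
        have h2 : ‖f (x n) - f z‖ ≤ α * ‖x n - z‖ := hf _ hxC _ hz
        calc ‖f (x n) - z‖ ≤ ‖f (x n) - f z‖ + ‖f z - z‖ := by rw [h1]; exact norm_add_le _ _
          _ ≤ α * K + (1 - α) * K := by nlinarith [norm_nonneg (x n - z)]
          _ = K := by ring
      have hTxz : ‖T n (x n) - z‖ ≤ K := by
        have := hT n _ hxC _ hz
        rw [hzfix n] at this
        linarith
      constructor
      · rw [hx n]; exact hC hfx hTx ha0 (by linarith) (by ring)
      · have heq : x (n+1) - z = a n • (f (x n) - z) + (1 - a n) • (T n (x n) - z) := by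
          rw [hx n]; module
        calc ‖x (n+1) - z‖ ≤ ‖a n • (f (x n) - z)‖ + ‖(1 - a n) • (T n (x n) - z)‖ := by
              rw [heq]; exact norm_add_le _ _
          _ = a n * ‖f (x n) - z‖ + (1 - a n) * ‖T n (x n) - z‖ := by
              rw [norm_smul, norm_smul, Real.norm_eq_abs, Real.norm_eq_abs,
                abs_of_nonneg ha0, abs_of_nonneg (by linarith : (0:ℝ) ≤ 1 - a n)]
          _ ≤ a n * K + (1 - a n) * K := by
              gcongr <;> linarith
          _ = K := by ring
  intro k n hn
  have hn1 : σ₃ (4 * K * (k + 1) - 1) ≤ n := le_trans (le_max_left _ _) hn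
  have hn2 : Φ (2 * k + 1) ≤ n := le_trans (le_max_right _ _) hn
  have han := hσ₃ _ n hn1
  have hxn := hΦ _ n hn2
  obtain ⟨hxC, hxK⟩ := key n
  obtain ⟨ha0, ha1⟩ := ha n
  have hfxz : ‖f (x n) - z‖ ≤ K := by
    have h1 : f (x n) - z = (f (x n) - f z) + (f z - z) := by abel
    have h2 : ‖f (x n) - f z‖ ≤ α * ‖x n - z‖ := hf _ hxC _ hz
    calc ‖f (x n) - z‖ ≤ ‖f (x n) - f z‖ + ‖f z - z‖ := by rw [h1]; exact norm_add_le _ _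
      _ ≤ α * K + (1 - α) * K := by nlinarith [norm_nonneg (x n - z)]
      _ = K := by ring
  have hTxz : ‖T n (x n) - z‖ ≤ K := by
    have := hT n _ hxC _ hz
    rw [hzfix n] at this
    linarith
  have hfT : ‖f (x n) - T n (x n)‖ ≤ 2 * K := by
    have h1 : f (x n) - T n (x n) = (f (x n) - z) + (z - T n (x n)) := by abel
    have h2 : ‖z - T n (x n)‖ = ‖T n (x n) - z‖ := norm_sub_rev _ _
    calc ‖f (x n) - T n (x n)‖ ≤ ‖f (x n) - z‖ + ‖z - T n (x n)‖ := by
          rw [h1]; exact norm_add_le _ _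
      _ ≤ 2 * K := by rw [h2]; linarith
  have hone : 1 ≤ 4 * K * (k + 1) := Nat.one_le_iff_ne_zero.mpr
    (Nat.mul_ne_zero (Nat.mul_ne_zero (by norm_num) (by omega)) (by omega))
  have hcast : ((4 * K * (k + 1) - 1 : ℕ) : ℝ) + 1 = 4 * K * (k + 1) := by
    push_cast [hone]; ring
  rw [hcast] at han
  have hcast2 : ((2 * k + 1 : ℕ) : ℝ) + 1 = 2 * (k + 1) := by push_cast; ring
  rw [hcast2] at hxn
  have hkpos : (0:ℝ) < k + 1 := by positivity
  have heq : x (n+1) - T n (x n) = a n • (f (x n) - T n (x n)) := by rw [hx n]; module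
  have hb : ‖x (n+1) - T n (x n)‖ ≤ 1 / (2 * (k + 1)) := by
    rw [heq, norm_smul, Real.norm_eq_abs, abs_of_nonneg ha0]
    have h3 : a n * ‖f (x n) - T n (x n)‖ ≤ (1 / (4 * K * (k + 1))) * (2 * K) := by
      apply mul_le_mul han hfT (norm_nonneg _)
      positivity
    have h4 : (1 / (4 * (K:ℝ) * (k + 1))) * (2 * K) = 1 / (2 * (k + 1)) := by
      field_simp; ring
    linarith [h4 ▸ h3]
  calc ‖x n - T n (x n)‖ ≤ ‖x n - x (n+1)‖ + ‖x (n+1) - T n (x n)‖ := by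
        have h1 : x n - T n (x n) = (x n - x (n+1)) + (x (n+1) - T n (x n)) := by abel
        rw [h1]; exact norm_add_le _ _
    _ ≤ 1 / (2 * (k + 1)) + 1 / (2 * (k + 1)) := by
        rw [norm_sub_rev]; exact add_le_add hxn hb
    _ = 1 / ((k:ℝ) + 1) := by rw [← add_div]; rw [show (2:ℝ) * ((k:ℝ)+1) = ((k:ℝ)+1) * 2 by ring, ← div_div]; field_simp; ring
end

section
/- In the genVAM setting in a real normed space, let (λ_n) ⊆ (0,∞), let Ψ be a rate of (T_n)-asymptotic regularity of (x_n), and let m ∈ ℕ. Assume (T_n) satisfies Res((λ_n), n, m) for all n ∈ ℕ, that Λ ∈ ℕ, Λ ≥ 1, and N_Λ ∈ ℕ are such that λ_n ≥ 1/Λ for all n ≥ N_Λ, and that Λ_m ∈ ℕ, Λ_m ≥ 1, satisfies Λ_m ≥ λ_m. Then Ψ_m(k) = max{N_Λ, Ψ(Λ_m·Λ·(k+1) - 1), Ψ(2k+1)} is a rate of T_m-asymptotic regularity of (x_n); that is, ‖x_n - T_m x_n‖ ≤ 1/(k+1) for all k, n ∈ ℕ with n ≥ Ψ_m(k). -/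
/-- If `Ψ` is a rate of `(T_n)`-asymptotic regularity of the genVAM iteration `(x_n)`,
`(T_n)` satisfies `Res((λ_n), n, m)` for all `n`, `λ_n ≥ 1/Λ` for `n ≥ N_Λ`, and
`Λ_m ≥ λ_m`, then `Ψ_m(k) = max {N_Λ, Ψ(Λ_m Λ (k+1) - 1), Ψ(2k+1)}` is a rate of
`T_m`-asymptotic regularity of `(x_n)`. -/
theorem genVAM_rate_of_Tm_asymptotic_regularity {X : Type*} [NormedAddCommGroup X]
    [NormedSpace ℝ X]
    (C : Set X) (hCne : C.Nonempty) (hC : Convex ℝ C)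
    (f : X → X) (α : ℝ) (hα0 : 0 ≤ α) (hα1 : α < 1)
    (hfC : ∀ x ∈ C, f x ∈ C)
    (hf : ∀ x ∈ C, ∀ y ∈ C, ‖f x - f y‖ ≤ α * ‖x - y‖)
    (T : ℕ → X → X) (hTC : ∀ n, ∀ x ∈ C, T n x ∈ C)
    (hT : ∀ n, ∀ x ∈ C, ∀ y ∈ C, ‖T n x - T n y‖ ≤ ‖x - y‖)
    (z : X) (hz : z ∈ C) (hzfix : ∀ n, T n z = z)
    (a : ℕ → ℝ) (ha : ∀ n, a n ∈ Set.Icc (0 : ℝ) 1)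
    (x : ℕ → X) (hx0 : x 0 ∈ C)
    (hx : ∀ n, x (n + 1) = a n • f (x n) + (1 - a n) • T n (x n))
    (lam : ℕ → ℝ) (hlam : ∀ n, 0 < lam n)
    (Ψ : ℕ → ℕ) (hΨ : ∀ k n : ℕ, Ψ k ≤ n → ‖x n - T n (x n)‖ ≤ 1 / ((k : ℝ) + 1))
    (m : ℕ)
    (hRes : ∀ n : ℕ, ∀ y ∈ C, ‖T n y - T m y‖ ≤ |1 - lam m / lam n| * ‖y - T n y‖)
    (Λ : ℕ) (hΛ : 1 ≤ Λ) (NΛ : ℕ) (hΛlam : ∀ n : ℕ, NΛ ≤ n → 1 / (Λ : ℝ) ≤ lam n)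
    (Λm : ℕ) (hΛm : 1 ≤ Λm) (hΛmlam : lam m ≤ Λm) :
    ∀ k n : ℕ, max (max NΛ (Ψ (Λm * Λ * (k + 1) - 1))) (Ψ (2 * k + 1)) ≤ n →
      ‖x n - T m (x n)‖ ≤ 1 / ((k : ℝ) + 1) := by
  have hxC : ∀ n, x n ∈ C := by
    intro n
    induction n with
    | zero => exact hx0
    | succ n ih =>
      rw [hx n]
      have h := ha n
      exact hC (hfC _ ih) (hTC n _ ih) h.1 (by linarith [h.2]) (by ring)
  intro k n hn
  have hnNΛ : NΛ ≤ n := le_trans (le_trans (le_max_left _ _) (le_max_left _ _)) hn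
  have hn1 : Ψ (Λm * Λ * (k + 1) - 1) ≤ n :=
    le_trans (le_trans (le_max_right _ _) (le_max_left _ _)) hn
  have hn2 : Ψ (2 * k + 1) ≤ n := le_trans (le_max_right _ _) hn
  have hlamn := hlam n
  have hlamm := hlam m
  have hΛpos : (0:ℝ) < (Λ:ℝ) := by exact_mod_cast hΛ
  have hΛmpos : (0:ℝ) < (Λm:ℝ) := by exact_mod_cast hΛm
  set t : ℝ := lam m / lam n with ht
  have htpos : 0 < t := div_pos hlamm hlamn
  have htle : t ≤ (Λm:ℝ) * Λ := by
    rw [ht, div_le_iff₀ hlamn]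
    calc lam m ≤ (Λm:ℝ) := hΛmlam
      _ = (Λm:ℝ) * ((Λ:ℝ) * (1 / Λ)) := by field_simp
      _ ≤ (Λm:ℝ) * ((Λ:ℝ) * lam n) := by
          gcongr
          exact hΛlam n hnNΛ
      _ = (Λm:ℝ) * Λ * lam n := by ring
  have hres := hRes n (x n) (hxC n)
  have htri : ‖x n - T m (x n)‖ ≤ (1 + |1 - t|) * ‖x n - T n (x n)‖ := by
    calc ‖x n - T m (x n)‖ ≤ ‖x n - T n (x n)‖ + ‖T n (x n) - T m (x n)‖ :=
          norm_sub_le_norm_sub_add_norm_sub _ _ _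
      _ ≤ ‖x n - T n (x n)‖ + |1 - t| * ‖x n - T n (x n)‖ := by linarith
      _ = (1 + |1 - t|) * ‖x n - T n (x n)‖ := by ring
  rcases le_or_gt t 1 with hcase | hcase
  · have habs : |1 - t| = 1 - t := abs_of_nonneg (by linarith)
    have hb := hΨ (2 * k + 1) n hn2
    have hnorm : (0:ℝ) ≤ ‖x n - T n (x n)‖ := norm_nonneg _
    calc ‖x n - T m (x n)‖ ≤ (1 + |1 - t|) * ‖x n - T n (x n)‖ := htri
      _ ≤ 2 * ‖x n - T n (x n)‖ := by
          rw [habs]; nlinarith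
      _ ≤ 2 * (1 / (((2 * k + 1 : ℕ):ℝ) + 1)) := by linarith
      _ = 1 / ((k:ℝ) + 1) := by
          push_cast
          have : (0:ℝ) < (k:ℝ)+1 := by positivity
          field_simp
          ring
  · have habs : |1 - t| = t - 1 := by rw [abs_sub_comm] at *; exact abs_of_pos (by linarith)
    have hb := hΨ (Λm * Λ * (k + 1) - 1) n hn1
    have hnat : ((Λm * Λ * (k + 1) - 1 : ℕ):ℝ) + 1 = (Λm:ℝ) * Λ * (k + 1) := by
      have h1 : 1 ≤ Λm * Λ * (k + 1) := Nat.one_le_iff_ne_zero.mpr (by positivity)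
      have : (Λm * Λ * (k + 1) - 1) + 1 = Λm * Λ * (k + 1) := Nat.succ_pred_eq_of_pos h1
      calc ((Λm * Λ * (k + 1) - 1 : ℕ):ℝ) + 1 = (((Λm * Λ * (k + 1) - 1) + 1 : ℕ):ℝ) := by
            push_cast; ring
        _ = ((Λm * Λ * (k + 1) : ℕ):ℝ) := by rw [this]
        _ = (Λm:ℝ) * Λ * (k + 1) := by push_cast; ring
    rw [hnat] at hb
    have hnorm : (0:ℝ) ≤ ‖x n - T n (x n)‖ := norm_nonneg _
    have hk1 : (0:ℝ) < (k:ℝ) + 1 := by positivity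
    calc ‖x n - T m (x n)‖ ≤ (1 + |1 - t|) * ‖x n - T n (x n)‖ := htri
      _ = t * ‖x n - T n (x n)‖ := by rw [habs]; ring
      _ ≤ ((Λm:ℝ) * Λ) * ‖x n - T n (x n)‖ := by gcongr
      _ ≤ ((Λm:ℝ) * Λ) * (1 / ((Λm:ℝ) * Λ * (k + 1))) := by
          apply mul_le_mul_of_nonneg_left hb (by positivity)
      _ = 1 / ((k:ℝ) + 1) := by
          rw [mul_one_div]
          field_simp
end

section
/- In the genVAM setting in a real normed space, set J = 2⌈1/(1-α)⌉, α_n = 2/((1-α)(n+J)) and λ_n = (n+J)/(n+J-1) for all n ∈ ℕ, and assume (T_n) satisfies Res((λ_n), n, n+1) for all n ∈ ℕ. Then for all n ∈ ℕ: ‖x_{n+1} - x_n‖ ≤ 3·J·K_z/((1-α)(n+J)) and ‖x_n - T_n x_n‖ ≤ (3J+4)·K_z/((1-α)(n+J)). -/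
set_option maxHeartbeats 1000000


/-- Linear rates for the genVAM iteration with `J = 2⌈1/(1-α)⌉`,
`α_n = 2/((1-α)(n+J))` and `λ_n = (n+J)/(n+J-1)`: for all `n`,
`‖x_{n+1} - x_n‖ ≤ 3 J K_z/((1-α)(n+J))` and
`‖x_n - T_n x_n‖ ≤ (3J+4) K_z/((1-α)(n+J))`. -/
theorem genVAM_linear_rates {X : Type*} [NormedAddCommGroup X] [NormedSpace ℝ X]
    (C : Set X) (hCne : C.Nonempty) (hC : Convex ℝ C)
    (f : X → X) (α : ℝ) (hα0 : 0 ≤ α) (hα1 : α < 1)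
    (hfC : ∀ x ∈ C, f x ∈ C)
    (hf : ∀ x ∈ C, ∀ y ∈ C, ‖f x - f y‖ ≤ α * ‖x - y‖)
    (T : ℕ → X → X) (hTC : ∀ n, ∀ x ∈ C, T n x ∈ C)
    (hT : ∀ n, ∀ x ∈ C, ∀ y ∈ C, ‖T n x - T n y‖ ≤ ‖x - y‖)
    (z : X) (hz : z ∈ C) (hzfix : ∀ n, T n z = z)
    (J : ℕ) (hJ : J = 2 * ⌈1 / (1 - α)⌉₊)
    (a : ℕ → ℝ) (ha : ∀ n : ℕ, a n = 2 / ((1 - α) * ((n : ℝ) + J)))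
    (lam : ℕ → ℝ) (hlamdef : ∀ n : ℕ, lam n = ((n : ℝ) + J) / ((n : ℝ) + J - 1))
    (x : ℕ → X) (hx0 : x 0 ∈ C)
    (hx : ∀ n, x (n + 1) = a n • f (x n) + (1 - a n) • T n (x n))
    (K : ℕ) (hK : 1 ≤ K)
    (hK1 : ‖x 0 - z‖ ≤ K) (hK2 : ‖f z - z‖ / (1 - α) ≤ K)
    (hRes : ∀ n : ℕ, ∀ y ∈ C, ‖T n y - T (n + 1) y‖ ≤ |1 - lam (n + 1) / lam n| * ‖y - T n y‖) :
    ∀ n : ℕ,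
      ‖x (n + 1) - x n‖ ≤ 3 * (J : ℝ) * K / ((1 - α) * ((n : ℝ) + J)) ∧
      ‖x n - T n (x n)‖ ≤ (3 * (J : ℝ) + 4) * K / ((1 - α) * ((n : ℝ) + J)) := by
  have h1α : (0:ℝ) < 1 - α := by linarith
  have h1α1 : (1:ℝ) - α ≤ 1 := by linarith
  have hK' : (1:ℝ) ≤ K := by exact_mod_cast hK
  have hKpos : (0:ℝ) < K := by linarith
  have hJle : 2 / (1 - α) ≤ (J:ℝ) := by
    rw [hJ]
    push_cast
    have h := Nat.le_ceil (1 / (1 - α))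
    calc 2 / (1 - α) = 2 * (1 / (1 - α)) := by ring
      _ ≤ 2 * (⌈1 / (1 - α)⌉₊ : ℝ) := by linarith
  have h2div : (2:ℝ) ≤ 2 / (1 - α) := by
    rw [le_div_iff₀ h1α]; nlinarith
  have hJ2 : (2:ℝ) ≤ (J:ℝ) := le_trans h2div hJle
  -- basic facts about m = n + J
  have hm2 : ∀ n : ℕ, (2:ℝ) ≤ (n:ℝ) + J := fun n => by
    have : (0:ℝ) ≤ (n:ℝ) := Nat.cast_nonneg n
    linarith
  have hmpos : ∀ n : ℕ, (0:ℝ) < (n:ℝ) + J := fun n => lt_of_lt_of_le (by norm_num) (hm2 n)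
  have hm1α : ∀ n : ℕ, (2:ℝ) ≤ (1 - α) * ((n:ℝ) + J) := fun n => by
    have h1 : (1 - α) * (2 / (1 - α)) ≤ (1 - α) * ((n:ℝ) + J) := by
      apply mul_le_mul_of_nonneg_left _ (le_of_lt h1α)
      have : (0:ℝ) ≤ (n:ℝ) := Nat.cast_nonneg n
      linarith [hJle]
    rwa [mul_div_cancel₀ _ (ne_of_gt h1α)] at h1
  have hapos : ∀ n : ℕ, 0 < a n := fun n => by
    rw [ha]; positivity
  have hale1 : ∀ n : ℕ, a n ≤ 1 := fun n => by
    rw [ha, div_le_one (by linarith [hm1α n])]; linarith [hm1α n]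
  have hfz : ‖f z - z‖ ≤ (1 - α) * K := by
    rw [div_le_iff₀ h1α] at hK2; linarith
  -- membership and boundedness
  have main : ∀ n, x n ∈ C ∧ ‖x n - z‖ ≤ K := by
    intro n
    induction n with
    | zero => exact ⟨hx0, hK1⟩
    | succ n ih =>
      obtain ⟨hxC, hxb⟩ := ih
      have hmem : x (n + 1) ∈ C := by
        rw [hx]
        exact hC (hfC _ hxC) (hTC n _ hxC) (le_of_lt (hapos n))
          (by linarith [hale1 n]) (by ring)
      refine ⟨hmem, ?_⟩
      have hfb : ‖f (x n) - z‖ ≤ K := by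
        calc ‖f (x n) - z‖ ≤ ‖f (x n) - f z‖ + ‖f z - z‖ := by
              simpa using norm_add_le (f (x n) - f z) (f z - z)
          _ ≤ α * ‖x n - z‖ + (1 - α) * K := add_le_add (hf _ hxC _ hz) hfz
          _ ≤ α * K + (1 - α) * K := by nlinarith
          _ = K := by ring
      have hTb : ‖T n (x n) - z‖ ≤ K := by
        calc ‖T n (x n) - z‖ = ‖T n (x n) - T n z‖ := by rw [hzfix]
          _ ≤ ‖x n - z‖ := hT n _ hxC _ hz
          _ ≤ K := hxb
      have hid : x (n + 1) - z = a n • (f (x n) - z) + (1 - a n) • (T n (x n) - z) := by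
        rw [hx]; module
      calc ‖x (n + 1) - z‖ ≤ ‖a n • (f (x n) - z)‖ + ‖(1 - a n) • (T n (x n) - z)‖ := by
            rw [hid]; exact norm_add_le _ _
        _ = a n * ‖f (x n) - z‖ + (1 - a n) * ‖T n (x n) - z‖ := by
            rw [norm_smul, norm_smul, Real.norm_eq_abs, Real.norm_eq_abs,
              abs_of_nonneg (le_of_lt (hapos n)), abs_of_nonneg (by linarith [hale1 n])]
        _ ≤ a n * K + (1 - a n) * K := by
            have h1 := hapos n; have h2 := hale1 n
            apply add_le_add
            · exact mul_le_mul_of_nonneg_left hfb (le_of_lt h1)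
            · exact mul_le_mul_of_nonneg_left hTb (by linarith)
        _ = K := by ring
  have hfTb : ∀ n, ‖f (x n) - T n (x n)‖ ≤ 2 * K := by
    intro n
    obtain ⟨hxC, hxb⟩ := main n
    have hfb : ‖f (x n) - z‖ ≤ K := by
      calc ‖f (x n) - z‖ ≤ ‖f (x n) - f z‖ + ‖f z - z‖ := by
            simpa using norm_add_le (f (x n) - f z) (f z - z)
        _ ≤ α * ‖x n - z‖ + (1 - α) * K := add_le_add (hf _ hxC _ hz) hfz
        _ ≤ α * K + (1 - α) * K := by nlinarith
        _ = K := by ring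
    have hTb : ‖T n (x n) - z‖ ≤ K := by
      calc ‖T n (x n) - z‖ = ‖T n (x n) - T n z‖ := by rw [hzfix]
        _ ≤ ‖x n - z‖ := hT n _ hxC _ hz
        _ ≤ K := hxb
    calc ‖f (x n) - T n (x n)‖ ≤ ‖f (x n) - z‖ + ‖z - T n (x n)‖ := by
          simpa using norm_add_le (f (x n) - z) (z - T n (x n))
      _ ≤ K + K := add_le_add hfb (by rwa [norm_sub_rev])
      _ = 2 * K := by ring
  have hxTb : ∀ n, ‖x n - T n (x n)‖ ≤ 2 * K := by
    intro n
    obtain ⟨hxC, hxb⟩ := main n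
    have hTb : ‖T n (x n) - z‖ ≤ K := by
      calc ‖T n (x n) - z‖ = ‖T n (x n) - T n z‖ := by rw [hzfix]
        _ ≤ ‖x n - z‖ := hT n _ hxC _ hz
        _ ≤ K := hxb
    calc ‖x n - T n (x n)‖ ≤ ‖x n - z‖ + ‖z - T n (x n)‖ := by
          simpa using norm_add_le (x n - z) (z - T n (x n))
      _ ≤ K + K := add_le_add hxb (by rwa [norm_sub_rev])
      _ = 2 * K := by ring
  -- the main difference bound
  have hD : ∀ n : ℕ, ‖x (n + 1) - x n‖ ≤ 3 * (J:ℝ) * K / ((1 - α) * ((n:ℝ) + J)) := by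
    intro n
    induction n with
    | zero =>
      have hid : x 1 - x 0 = a 0 • (f (x 0) - x 0) + (1 - a 0) • (T 0 (x 0) - x 0) := by
        rw [hx]; module
      have hfb : ‖f (x 0) - x 0‖ ≤ 2 * K := by
        have hfz' : ‖f (x 0) - z‖ ≤ K := by
          calc ‖f (x 0) - z‖ ≤ ‖f (x 0) - f z‖ + ‖f z - z‖ := by
                simpa using norm_add_le (f (x 0) - f z) (f z - z)
            _ ≤ α * ‖x 0 - z‖ + (1 - α) * K := add_le_add (hf _ hx0 _ hz) hfz
            _ ≤ α * K + (1 - α) * K := by nlinarith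
            _ = K := by ring
        calc ‖f (x 0) - x 0‖ ≤ ‖f (x 0) - z‖ + ‖z - x 0‖ := by
              simpa using norm_add_le (f (x 0) - z) (z - x 0)
          _ ≤ K + K := add_le_add hfz' (by rwa [norm_sub_rev])
          _ = 2 * K := by ring
      have hTb : ‖T 0 (x 0) - x 0‖ ≤ 2 * K := by
        rw [norm_sub_rev]; exact hxTb 0
      have h2K : ‖x 1 - x 0‖ ≤ 2 * K := by
        calc ‖x 1 - x 0‖ ≤ ‖a 0 • (f (x 0) - x 0)‖ + ‖(1 - a 0) • (T 0 (x 0) - x 0)‖ := by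
              rw [hid]; exact norm_add_le _ _
          _ = a 0 * ‖f (x 0) - x 0‖ + (1 - a 0) * ‖T 0 (x 0) - x 0‖ := by
              rw [norm_smul, norm_smul, Real.norm_eq_abs, Real.norm_eq_abs,
                abs_of_nonneg (le_of_lt (hapos 0)), abs_of_nonneg (by linarith [hale1 0])]
          _ ≤ a 0 * (2 * K) + (1 - a 0) * (2 * K) := by
              apply add_le_add
              · exact mul_le_mul_of_nonneg_left hfb (le_of_lt (hapos 0))
              · exact mul_le_mul_of_nonneg_left hTb (by linarith [hale1 0])
          _ = 2 * K := by ring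
      refine le_trans h2K ?_
      rw [le_div_iff₀ (by positivity)]
      simp only [Nat.cast_zero, zero_add]
      have h1 : (0:ℝ) ≤ (J:ℝ) * K := mul_nonneg (by linarith) (le_of_lt hKpos)
      have h2 : (0:ℝ) ≤ α * ((J:ℝ) * K) := mul_nonneg hα0 h1
      nlinarith [h1, h2]
    | succ n ih =>
      set m : ℝ := (n:ℝ) + J with hm
      clear_value m
      have hmge2 : (2:ℝ) ≤ m := by rw [hm]; exact hm2 n
      have hm1 : (2:ℝ) ≤ (1 - α) * m := by rw [hm]; exact hm1α n
      have hm1' : (2:ℝ) ≤ (1 - α) * (m + 1) := by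
        have h := hm1α (n + 1); push_cast at h; rw [hm]
        calc (2:ℝ) ≤ (1 - α) * ((n:ℝ) + 1 + J) := by linarith [h]
          _ = (1 - α) * ((n:ℝ) + J + 1) := by ring
      have hmpos' : (0:ℝ) < m := by linarith
      have hcast : ((n + 1 : ℕ) : ℝ) + J = m + 1 := by rw [hm]; push_cast; ring
      -- decomposition identity
      have hid : x (n + 2) - x (n + 1) =
          a (n + 1) • (f (x (n + 1)) - f (x n)) +
          (a (n + 1) - a n) • (f (x n) - T n (x n)) +
          (1 - a (n + 1)) • (T (n + 1) (x (n + 1)) - T (n + 1) (x n)) +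
          (1 - a (n + 1)) • (T (n + 1) (x n) - T n (x n)) := by
        rw [hx (n + 1), hx n]; module
      obtain ⟨hxnC, _⟩ := main n
      obtain ⟨hxn1C, _⟩ := main (n + 1)
      -- residual bound
      have hlam : |1 - lam (n + 1) / lam n| = 1 / (m * m) := by
        have hl0 : lam n = m / (m - 1) := by rw [hlamdef, hm]
        have hl1 : lam (n + 1) = (m + 1) / m := by
          rw [hlamdef]; push_cast
          have e1 : (n:ℝ) + 1 + J = m + 1 := by rw [hm]; ring
          have e2 : (n:ℝ) + 1 + J - 1 = m := by rw [hm]; ring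
          rw [e2, e1]
        have : 1 - lam (n + 1) / lam n = 1 / (m * m) := by
          rw [hl0, hl1]
          field_simp
          ring
        rw [this, abs_of_nonneg (by positivity)]
      have hres : ‖T (n + 1) (x n) - T n (x n)‖ ≤ 1 / (m * m) * (2 * K) := by
        calc ‖T (n + 1) (x n) - T n (x n)‖ = ‖T n (x n) - T (n + 1) (x n)‖ := norm_sub_rev _ _
          _ ≤ |1 - lam (n + 1) / lam n| * ‖x n - T n (x n)‖ := hRes n _ hxnC
          _ = 1 / (m * m) * ‖x n - T n (x n)‖ := by rw [hlam]
          _ ≤ 1 / (m * m) * (2 * K) := by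
              apply mul_le_mul_of_nonneg_left (hxTb n) (by positivity)
      -- a values
      have han : a n = 2 / ((1 - α) * m) := by rw [ha, hm]
      have han1 : a (n + 1) = 2 / ((1 - α) * (m + 1)) := by rw [ha, hcast]
      have hadiff : a n - a (n + 1) = 2 / ((1 - α) * m * (m + 1)) := by
        rw [han, han1]; field_simp; ring
      have ha1pos : 0 < a (n + 1) := hapos (n + 1)
      have ha1le : a (n + 1) ≤ 1 := hale1 (n + 1)
      have hanle : a (n + 1) ≤ a n := by
        have h0 : (0:ℝ) ≤ 2 / ((1 - α) * m * (m + 1)) := by positivity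
        linarith [hadiff]
      have h01 : (0:ℝ) ≤ 1 - a (n + 1) := by linarith
      have h02 : (0:ℝ) ≤ a n - a (n + 1) := by linarith
      have t1 : ‖a (n + 1) • (f (x (n + 1)) - f (x n))‖ ≤
          a (n + 1) * (α * ‖x (n + 1) - x n‖) := by
        rw [norm_smul, Real.norm_eq_abs, abs_of_nonneg ha1pos.le]
        exact mul_le_mul_of_nonneg_left (hf _ hxn1C _ hxnC) ha1pos.le
      have t2 : ‖(a (n + 1) - a n) • (f (x n) - T n (x n))‖ ≤
          (a n - a (n + 1)) * (2 * K) := by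
        rw [norm_smul, Real.norm_eq_abs, abs_sub_comm, abs_of_nonneg h02]
        exact mul_le_mul_of_nonneg_left (hfTb n) h02
      have t3 : ‖(1 - a (n + 1)) • (T (n + 1) (x (n + 1)) - T (n + 1) (x n))‖ ≤
          (1 - a (n + 1)) * ‖x (n + 1) - x n‖ := by
        rw [norm_smul, Real.norm_eq_abs, abs_of_nonneg h01]
        exact mul_le_mul_of_nonneg_left (hT (n + 1) _ hxn1C _ hxnC) h01
      have t4 : ‖(1 - a (n + 1)) • (T (n + 1) (x n) - T n (x n))‖ ≤
          (1 - a (n + 1)) * (1 / (m * m) * (2 * K)) := by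
        rw [norm_smul, Real.norm_eq_abs, abs_of_nonneg h01]
        exact mul_le_mul_of_nonneg_left hres h01
      have hbound : ‖x (n + 2) - x (n + 1)‖ ≤
          a (n + 1) * (α * ‖x (n + 1) - x n‖) + (a n - a (n + 1)) * (2 * K) +
          (1 - a (n + 1)) * ‖x (n + 1) - x n‖ + (1 - a (n + 1)) * (1 / (m * m) * (2 * K)) := by
        rw [hid]
        refine le_trans (norm_add_le _ _) ?_
        refine le_trans (add_le_add (norm_add_le _ _) le_rfl) ?_
        refine le_trans (add_le_add (add_le_add (norm_add_le _ _) le_rfl) le_rfl) ?_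
        linarith [t1, t2, t3, t4]
      -- finish with arithmetic
      rw [hcast]
      have hkey : a (n + 1) * (α * (3 * (J:ℝ) * K / ((1 - α) * m))) +
          (a n - a (n + 1)) * (2 * K) +
          (1 - a (n + 1)) * (3 * (J:ℝ) * K / ((1 - α) * m)) +
          (1 - a (n + 1)) * (1 / (m * m) * (2 * K)) ≤
          3 * (J:ℝ) * K / ((1 - α) * (m + 1)) := by
        rw [hadiff, han1, ← sub_nonneg]
        have hexp : 3 * (J:ℝ) * K / ((1 - α) * (m + 1)) -
            (2 / ((1 - α) * (m + 1)) * (α * (3 * (J:ℝ) * K / ((1 - α) * m))) +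
            2 / ((1 - α) * m * (m + 1)) * (2 * K) +
            (1 - 2 / ((1 - α) * (m + 1))) * (3 * (J:ℝ) * K / ((1 - α) * m)) +
            (1 - 2 / ((1 - α) * (m + 1))) * (1 / (m * m) * (2 * K))) =
            ((3 * (J:ℝ) - 4) * m - 2 * (1 - α) * (m + 1) + 4) * K /
              ((1 - α) * (m * m) * (m + 1)) := by
          field_simp
          ring
        rw [hexp]
        apply div_nonneg _ (by positivity)
        have hnum : 0 ≤ (3 * (J:ℝ) - 4) * m - 2 * (1 - α) * (m + 1) + 4 := by
          nlinarith [hmge2, hJ2, h1α, h1α1]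
        positivity
      have hstep : a (n + 1) * (α * ‖x (n + 1) - x n‖) + (a n - a (n + 1)) * (2 * K) +
          (1 - a (n + 1)) * ‖x (n + 1) - x n‖ + (1 - a (n + 1)) * (1 / (m * m) * (2 * K)) ≤
          a (n + 1) * (α * (3 * (J:ℝ) * K / ((1 - α) * m))) + (a n - a (n + 1)) * (2 * K) +
          (1 - a (n + 1)) * (3 * (J:ℝ) * K / ((1 - α) * m)) +
          (1 - a (n + 1)) * (1 / (m * m) * (2 * K)) := by
        have e1 : α * ‖x (n + 1) - x n‖ ≤ α * (3 * (J:ℝ) * K / ((1 - α) * m)) :=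
          mul_le_mul_of_nonneg_left ih hα0
        have e2 := mul_le_mul_of_nonneg_left e1 ha1pos.le
        have e3 := mul_le_mul_of_nonneg_left ih h01
        linarith [e2, e3]
      exact le_trans hbound (le_trans hstep hkey)
  -- conclude
  intro n
  refine ⟨hD n, ?_⟩
  have hid : x (n + 1) - T n (x n) = a n • (f (x n) - T n (x n)) := by
    rw [hx]; module
  have h2 : ‖x (n + 1) - T n (x n)‖ ≤ a n * (2 * K) := by
    rw [hid, norm_smul, Real.norm_eq_abs, abs_of_nonneg (le_of_lt (hapos n))]
    exact mul_le_mul_of_nonneg_left (hfTb n) (le_of_lt (hapos n))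
  have hfin : 3 * (J:ℝ) * K / ((1 - α) * ((n:ℝ) + J)) + a n * (2 * K) =
      (3 * (J:ℝ) + 4) * K / ((1 - α) * ((n:ℝ) + J)) := by
    rw [ha]
    field_simp
    ring
  calc ‖x n - T n (x n)‖ ≤ ‖x n - x (n + 1)‖ + ‖x (n + 1) - T n (x n)‖ := by
        simpa using norm_add_le (x n - x (n + 1)) (x (n + 1) - T n (x n))
    _ ≤ 3 * (J:ℝ) * K / ((1 - α) * ((n:ℝ) + J)) + a n * (2 * K) := by
        apply add_le_add _ h2
        rw [norm_sub_rev]; exact hD n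
    _ = (3 * (J:ℝ) + 4) * K / ((1 - α) * ((n:ℝ) + J)) := hfin
end
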